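/- arXiv:2503.02336 — 3 statements merged into one kernel-verified Lean document; each statement's English description precedes it below -/
import Mathlib

section
/- Let S ⊆ ℝ² be a finite set and p = (a,b) ∈ S. Then p is an extreme point of the convex hull of S if and only if its dual line appears on the upper or lower envelope of the dual lines of S: there exists x ∈ ℝ such that a·x − b > c·x − d for every (c,d) ∈ S with (c,d) ≠ p, or there exists x ∈ ℝ such that a·x − b < c·x − d for every (c,d) ∈ S with (c,d) ≠ p. -/
/-- For a finite set `S ⊆ ℝ²` and `p = (a,b) ∈ S`: `p` is an extreme point of the convex
hull of `S` (i.e. `p ∉ convexHull (S \ {p})`) iff the dual line of `p` appears on the upper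
or lower envelope of the dual lines of `S`: at some `x ∈ ℝ` it is strictly above all the
other dual lines, or at some `x ∈ ℝ` it is strictly below all the other dual lines. -/
theorem extreme_iff_dual_on_envelope (S : Set (ℝ × ℝ)) (hS : S.Finite)
    (a b : ℝ) (hp : (a, b) ∈ S) :
    (a, b) ∉ convexHull ℝ (S \ {(a, b)}) ↔
      ((∃ x : ℝ, ∀ q ∈ S, q ≠ (a, b) → q.1 * x - q.2 < a * x - b) ∨
       (∃ x : ℝ, ∀ q ∈ S, q ≠ (a, b) → a * x - b < q.1 * x - q.2)) := by
  set T : Set (ℝ × ℝ) := S \ {(a, b)} with hTdef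
  have hTfin : T.Finite := hS.subset Set.diff_subset
  have hmemT : ∀ q, q ∈ T ↔ (q ∈ S ∧ q ≠ (a, b)) := by
    intro q; simp [hTdef]
  constructor
  · intro hnot
    obtain ⟨f, u, hfu, hup⟩ := geometric_hahn_banach_closed_point
      (convex_convexHull ℝ T) (hTfin.isClosed_convexHull (𝕜 := ℝ)) hnot
    set α := f (1, 0) with hα
    set β := f (0, 1) with hβv
    have hf : ∀ z : ℝ × ℝ, f z = α * z.1 + β * z.2 := by
      intro z
      have hz : z = z.1 • ((1 : ℝ), (0 : ℝ)) + z.2 • ((0 : ℝ), (1 : ℝ)) := by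
        ext <;> simp
      rw [hz, map_add, map_smul, map_smul]
      simp [hα, hβv, mul_comm]
    have key : ∀ q ∈ T, α * q.1 + β * q.2 < α * a + β * b := by
      intro q hq
      have h1 : f q < u := hfu q (subset_convexHull ℝ T hq)
      have h2 : u < f (a, b) := hup
      have := h1.trans h2
      rw [hf q, hf (a, b)] at this
      simpa using this
    rcases lt_trichotomy β 0 with hβ | hβ | hβ
    · left
      refine ⟨α / (-β), fun q hq hne => ?_⟩
      have hk := key q ((hmemT q).2 ⟨hq, hne⟩)
      have hβ' : (0 : ℝ) < -β := by linarith
      have h1 : (q.1 - a) * α < (q.2 - b) * (-β) := by nlinarith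
      have h2 : (q.1 - a) * (α / (-β)) < q.2 - b := by
        rw [← mul_div_assoc, div_lt_iff₀ hβ']; exact h1
      linarith
    · -- β = 0
      have key' : ∀ q ∈ T, α * q.1 < α * a := by
        intro q hq
        have := key q hq
        rw [hβ] at this; linarith
      rcases lt_trichotomy α 0 with hα0 | hα0 | hα0
      · -- a < q.1 for all q ∈ T; pick x below all ratios
        have hratios : ((fun q : ℝ × ℝ => (b - q.2) / (a - q.1)) '' T).Finite :=
          hTfin.image _
        obtain ⟨m, hm⟩ := hratios.bddBelow
        left
        refine ⟨m - 1, fun q hq hne => ?_⟩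
        have hqT : q ∈ T := (hmemT q).2 ⟨hq, hne⟩
        have hlt : a < q.1 := by
          have := key' q hqT; nlinarith
        have hden : a - q.1 < 0 := by linarith
        have hmem : (b - q.2) / (a - q.1) ∈ _ := Set.mem_image_of_mem (fun q : ℝ × ℝ => (b - q.2) / (a - q.1)) hqT
        have hge : m ≤ (b - q.2) / (a - q.1) := hm hmem
        have hx : m - 1 < (b - q.2) / (a - q.1) := by linarith
        have : (a - q.1) * ((b - q.2) / (a - q.1)) < (a - q.1) * (m - 1) :=
          mul_lt_mul_of_neg_left hx hden
        rw [mul_div_cancel₀ _ (ne_of_lt hden)] at this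
        linarith
      · -- α = 0: T must be empty
        left
        refine ⟨0, fun q hq hne => ?_⟩
        have := key' q ((hmemT q).2 ⟨hq, hne⟩)
        rw [hα0] at this; simp at this
      · -- q.1 < a for all q ∈ T; pick x above all ratios
        have hratios : ((fun q : ℝ × ℝ => (b - q.2) / (a - q.1)) '' T).Finite :=
          hTfin.image _
        obtain ⟨M, hM⟩ := hratios.bddAbove
        left
        refine ⟨M + 1, fun q hq hne => ?_⟩
        have hqT : q ∈ T := (hmemT q).2 ⟨hq, hne⟩
        have hlt : q.1 < a := by
          have := key' q hqT; nlinarith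
        have hden : 0 < a - q.1 := by linarith
        have hmem : (b - q.2) / (a - q.1) ∈ _ := Set.mem_image_of_mem (fun q : ℝ × ℝ => (b - q.2) / (a - q.1)) hqT
        have hle : (b - q.2) / (a - q.1) ≤ M := hM hmem
        have hx : (b - q.2) / (a - q.1) < M + 1 := by linarith
        have : (a - q.1) * ((b - q.2) / (a - q.1)) < (a - q.1) * (M + 1) :=
          mul_lt_mul_of_pos_left hx hden
        rw [mul_div_cancel₀ _ (ne_of_gt hden)] at this
        linarith
    · right
      refine ⟨-(α / β), fun q hq hne => ?_⟩
      have hk := key q ((hmemT q).2 ⟨hq, hne⟩)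
      have h1 : (q.1 - a) * α < (b - q.2) * β := by nlinarith
      have h2 : (q.1 - a) * (α / β) < b - q.2 := by
        rw [← mul_div_assoc, div_lt_iff₀ hβ]; exact h1
      linarith
  · rintro (⟨x, hx⟩ | ⟨x, hx⟩) hmem
    · have hlin : IsLinearMap ℝ (fun z : ℝ × ℝ => z.1 * x - z.2) := by
        constructor
        · intro u v; simp [Prod.fst_add, Prod.snd_add]; ring
        · intro c u; simp [Prod.smul_fst, Prod.smul_snd, smul_eq_mul]; ring
      have hsub : convexHull ℝ T ⊆ {z : ℝ × ℝ | z.1 * x - z.2 < a * x - b} := by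
        apply convexHull_min _ (convex_halfSpace_lt hlin _)
        intro q hq
        exact hx q ((hmemT q).1 hq).1 ((hmemT q).1 hq).2
      have := hsub hmem
      simp at this
    · have hlin : IsLinearMap ℝ (fun z : ℝ × ℝ => z.1 * x - z.2) := by
        constructor
        · intro u v; simp [Prod.fst_add, Prod.snd_add]; ring
        · intro c u; simp [Prod.smul_fst, Prod.smul_snd, smul_eq_mul]; ring
      have hsub : convexHull ℝ T ⊆ {z : ℝ × ℝ | a * x - b < z.1 * x - z.2} := by
        apply convexHull_min _ (convex_halfSpace_gt hlin _)
        intro q hq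
        exact hx q ((hmemT q).1 hq).1 ((hmemT q).1 hq).2
      have := hsub hmem
      simp at this
end

section
/- Let p₁, p₂, p₃, p₄ be four distinct points in ℝ² in general position. Among the three ways to partition {p₁,p₂,p₃,p₄} into two pairs, at most one partition has the property that the open segment joining the first pair intersects the open segment joining the second pair; and exactly one such partition has this property if and only if the four points are in convex position. -/
/-- The orientation determinant of the ordered triple of points `p, q, r ∈ ℝ²`. -/
def odet (p q r : ℝ × ℝ) : ℝ :=
  (q.1 - p.1) * (r.2 - p.2) - (q.2 - p.2) * (r.1 - p.1)

/-- A set of points in the plane is in general position if no three of its points are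
collinear. -/
def GenPos (S : Set (ℝ × ℝ)) : Prop :=
  ∀ p ∈ S, ∀ q ∈ S, ∀ r ∈ S, p ≠ q → p ≠ r → q ≠ r → odet p q r ≠ 0

/-- A set of points is in convex position if every point is an extreme point of the convex
hull of the set. -/
def ConvexPos (S : Set (ℝ × ℝ)) : Prop :=
  ∀ p ∈ S, p ∉ convexHull ℝ (S \ {p})

/-- The open segments joining `a, b` and `c, d` cross. -/
def SegCross (a b c d : ℝ × ℝ) : Prop :=
  (openSegment ℝ a b ∩ openSegment ℝ c d).Nonempty

lemma odet_affine (a b c d : ℝ × ℝ) (u v : ℝ) (huv : u + v = 1) :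
    odet a b (u • c + v • d) = u * odet a b c + v * odet a b d := by
  simp [odet, Prod.smul_def, Prod.fst_add, Prod.snd_add, smul_eq_mul]
  have hv : v = 1 - u := by linarith
  subst hv; ring

lemma opp_sign (s t x y : ℝ) (hs : 0 < s) (ht : 0 < t) (h : s*x + t*y = 0)
    (hx : x ≠ 0) : x * y < 0 := by
  rcases hx.lt_or_gt with h' | h'
  · have : 0 < t*y := by nlinarith
    nlinarith
  · have : t*y < 0 := by nlinarith
    nlinarith

lemma odet_self₁ (a b : ℝ × ℝ) : odet a b a = 0 := by unfold odet; ring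
lemma odet_self₂ (a b : ℝ × ℝ) : odet a b b = 0 := by unfold odet; ring

lemma param_range (t C D : ℝ) (h : (1-t)*C + t*D = 0) (hCD : C*D < 0) :
    0 < t ∧ t < 1 := by
  have h' : (1-t)*(C*D) + t*(D*D) = 0 := by linear_combination D*h
  have h'' : (1-t)*(C*C) + t*(C*D) = 0 := by linear_combination C*h
  constructor
  · by_contra ht
    push_neg at ht
    nlinarith [sq_nonneg D, sq_nonneg C]
  · by_contra ht
    push_neg at ht
    nlinarith [sq_nonneg D, sq_nonneg C]

lemma collinear_param (a b x : ℝ × ℝ) (hab : a ≠ b) (h : odet a b x = 0) :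
    ∃ t : ℝ, x = (1-t) • a + t • b := by
  simp only [odet] at h
  by_cases h1 : b.1 = a.1
  · have h2 : b.2 ≠ a.2 := by
      intro h2; exact hab (Prod.ext (h1.symm) (h2.symm))
    refine ⟨(x.2 - a.2)/(b.2 - a.2), ?_⟩
    have hne : b.2 - a.2 ≠ 0 := sub_ne_zero.2 h2
    apply Prod.ext <;> simp [Prod.smul_def, smul_eq_mul] <;> field_simp <;> nlinarith [h]
  · refine ⟨(x.1 - a.1)/(b.1 - a.1), ?_⟩
    have hne : b.1 - a.1 ≠ 0 := sub_ne_zero.2 h1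
    apply Prod.ext <;> simp [Prod.smul_def, smul_eq_mul] <;> field_simp <;> nlinarith [h]

lemma segCross_iff (a b c d : ℝ × ℝ) (h1 : odet a b c ≠ 0) (h2 : odet a b d ≠ 0)
    (h3 : odet c d a ≠ 0) (h4 : odet c d b ≠ 0) :
    SegCross a b c d ↔ odet a b c * odet a b d < 0 ∧ odet c d a * odet c d b < 0 := by
  constructor
  · rintro ⟨x, hx1, hx2⟩
    obtain ⟨u, v, hu, hv, huv, hxa⟩ := hx1
    obtain ⟨s, t, hs, ht, hst, hxc⟩ := hx2
    have e1 : s * odet a b c + t * odet a b d = 0 := by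
      have := odet_affine a b c d s t hst
      rw [hxc] at this
      have h0 : odet a b x = 0 := by
        rw [← hxa, odet_affine a b a b u v huv, odet_self₁, odet_self₂]; ring
      linarith [this, h0]
    have e2 : u * odet c d a + v * odet c d b = 0 := by
      have := odet_affine c d a b u v huv
      rw [hxa] at this
      have h0 : odet c d x = 0 := by
        rw [← hxc, odet_affine c d c d s t hst, odet_self₁, odet_self₂]; ring
      linarith [this, h0]
    exact ⟨opp_sign s t _ _ hs ht e1 h1, opp_sign u v _ _ hu hv e2 h3⟩
  · rintro ⟨hab, hcd⟩
    set A := odet a b c with hA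
    set B := odet a b d with hB
    have hBA : B - A ≠ 0 := by
      intro h; apply h2; nlinarith [sub_eq_zero.1 h]
    set u := B / (B - A) with hu
    set v := -A / (B - A) with hv
    have huv : u + v = 1 := by rw [hu, hv, ← add_div, div_eq_one_iff_eq hBA]; ring
    have hu0 : 0 < u := by
      rcases (mul_neg_iff.1 hab) with ⟨hA', hB'⟩ | ⟨hA', hB'⟩
      · exact div_pos_iff.2 (Or.inr ⟨by linarith, by linarith⟩)
      · exact div_pos_iff.2 (Or.inl ⟨by linarith, by linarith⟩)
    have hv0 : 0 < v := by
      rcases (mul_neg_iff.1 hab) with ⟨hA', hB'⟩ | ⟨hA', hB'⟩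
      · exact div_pos_iff.2 (Or.inr ⟨by linarith, by linarith⟩)
      · exact div_pos_iff.2 (Or.inl ⟨by linarith, by linarith⟩)
    set x := u • c + v • d with hx
    have key : u * A + v * B = 0 := by
      rw [hu, hv, div_mul_eq_mul_div, div_mul_eq_mul_div, ← add_div,
        div_eq_zero_iff]
      left; ring
    have hxab : odet a b x = 0 := by
      rw [hx, odet_affine a b c d u v huv]; exact key
    have habne : a ≠ b := by
      intro h; apply h1; rw [hA, h]; unfold odet; ring
    obtain ⟨t, hxt⟩ := collinear_param a b x habne hxab
    have hcdx : odet c d x = 0 := by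
      rw [hx, odet_affine c d c d u v huv, odet_self₁, odet_self₂]; ring
    have hlin : (1-t) * odet c d a + t * odet c d b = 0 := by
      have := odet_affine c d a b (1-t) t (by ring)
      rw [← hxt] at this
      linarith [this, hcdx]
    obtain ⟨ht0, ht1⟩ := param_range t _ _ hlin hcd
    exact ⟨x, ⟨1 - t, t, by linarith, ht0, by ring, hxt.symm⟩, ⟨u, v, hu0, hv0, huv, rfl⟩⟩

lemma odet_affine₃ (x y a b c : ℝ × ℝ) (α β γ : ℝ) (h : α + β + γ = 1) :
    odet x y (α • a + β • b + γ • c) =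
      α * odet x y a + β * odet x y b + γ * odet x y c := by
  have : γ = 1 - α - β := by linarith
  subst this
  simp only [odet, Prod.smul_def, Prod.fst_add, Prod.snd_add, smul_eq_mul]
  ring

lemma odet_cyc (a b c : ℝ × ℝ) : odet b c a = odet a b c := by unfold odet; ring

lemma bary_sum (a b c p : ℝ × ℝ) :
    odet b c p + odet c a p + odet a b p = odet a b c := by unfold odet; ring

lemma bary_repr (a b c p : ℝ × ℝ) (hD : odet a b c ≠ 0) :
    (odet b c p / odet a b c) • a + (odet c a p / odet a b c) • b +
      (odet a b p / odet a b c) • c = p := by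
  apply Prod.ext <;>
    simp only [Prod.smul_def, Prod.fst_add, Prod.snd_add, smul_eq_mul] <;>
    field_simp <;>
    · unfold odet
      ring


lemma div_pos_of_mul_pos {x y : ℝ} (h : 0 < x*y) : 0 < x/y := by
  rcases mul_pos_iff.1 h with ⟨hx,hy⟩|⟨hx,hy⟩
  exacts [div_pos hx hy, div_pos_of_neg_of_neg hx hy]

lemma mem_triangle_iff (a b c p : ℝ × ℝ) (hD : odet a b c ≠ 0)
    (h1 : odet a b p ≠ 0) (h2 : odet b c p ≠ 0) (h3 : odet c a p ≠ 0) :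
    p ∈ convexHull ℝ ({a, b, c} : Set (ℝ × ℝ)) ↔
      0 < odet b c p * odet a b c ∧ 0 < odet c a p * odet a b c ∧
        0 < odet a b p * odet a b c := by
  have hbc : ({b, c} : Set (ℝ × ℝ)).Nonempty := ⟨b, by simp⟩
  rw [show ({a, b, c} : Set (ℝ × ℝ)) = insert a {b, c} from rfl,
    convexHull_insert hbc, convexHull_pair, mem_convexJoin]
  constructor
  · rintro ⟨a', ha', x, hx, hpx⟩
    rw [Set.mem_singleton_iff] at ha'
    subst ha'
    obtain ⟨s, t, hs, ht, hst, hxe⟩ := hx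
    obtain ⟨u, v, hu, hv, huv, hpe⟩ := hpx
    have hpeq : p = u • a' + (v*s) • b + (v*t) • c := by
      rw [← hpe, ← hxe]; module
    have hsum : u + v*s + v*t = 1 := by nlinarith
    have e1 : odet a' b p = (v*t) * odet a' b c := by
      rw [hpeq, odet_affine₃ a' b a' b c _ _ _ hsum]
      have z1 : odet a' b a' = 0 := by unfold odet; ring
      have z2 : odet a' b b = 0 := by unfold odet; ring
      rw [z1, z2]; ring
    have e2 : odet b c p = u * odet a' b c := by
      rw [hpeq, odet_affine₃ b c a' b c _ _ _ hsum]
      have z1 : odet b c b = 0 := by unfold odet; ring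
      have z2 : odet b c c = 0 := by unfold odet; ring
      have z3 : odet b c a' = odet a' b c := odet_cyc a' b c
      rw [z1, z2, z3]; ring
    have e3 : odet c a' p = (v*s) * odet a' b c := by
      rw [hpeq, odet_affine₃ c a' a' b c _ _ _ hsum]
      have z1 : odet c a' a' = 0 := by unfold odet; ring
      have z2 : odet c a' c = 0 := by unfold odet; ring
      have z3 : odet c a' b = odet a' b c := by unfold odet; ring
      rw [z1, z2, z3]; ring
    have hu' : 0 < u := lt_of_le_of_ne hu (fun h => h2 (by rw [e2, ← h, zero_mul]))
    have hvt' : 0 < v*t :=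
      lt_of_le_of_ne (mul_nonneg hv ht) (fun h => h1 (by rw [e1, ← h, zero_mul]))
    have hvs' : 0 < v*s :=
      lt_of_le_of_ne (mul_nonneg hv hs) (fun h => h3 (by rw [e3, ← h, zero_mul]))
    have hDD : 0 < odet a' b c * odet a' b c := by
      rcases hD.lt_or_gt with h|h <;> nlinarith
    refine ⟨?_, ?_, ?_⟩
    · rw [e2]; nlinarith
    · rw [e3]; nlinarith
    · rw [e1]; nlinarith
  · rintro ⟨k2, k3, k1⟩
    have hα0 : 0 < odet b c p / odet a b c := div_pos_of_mul_pos k2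
    have hβ0 : 0 < odet c a p / odet a b c := div_pos_of_mul_pos k3
    have hγ0 : 0 < odet a b p / odet a b c := div_pos_of_mul_pos k1
    set D := odet a b c
    set α := odet b c p / D with hα
    set β := odet c a p / D with hβ
    set γ := odet a b p / D with hγ
    have hsum : α + β + γ = 1 := by
      rw [hα, hβ, hγ, ← add_div, ← add_div, bary_sum, div_self hD]
    have hrepr : α • a + β • b + γ • c = p := bary_repr a b c p hD
    have hβγ : 0 < β + γ := by linarith
    refine ⟨a, rfl, (β/(β+γ)) • b + (γ/(β+γ)) • c,
      ⟨β/(β+γ), γ/(β+γ), by positivity, by positivity, ?_, rfl⟩,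
      ⟨α, β+γ, hα0.le, hβγ.le, by linarith, ?_⟩⟩
    · rw [← add_div, div_self hβγ.ne']
    · rw [smul_add, smul_smul, smul_smul, mul_div_cancel₀ _ hβγ.ne',
        mul_div_cancel₀ _ hβγ.ne', ← add_assoc, hrepr]

lemma sign_main (a b c d : ℝ) (ha : a ≠ 0) (hb : b ≠ 0) (hc : c ≠ 0) (hd : d ≠ 0)
    (hrel : a - b + c - d = 0) :
    (¬((a*b<0 ∧ c*d<0) ∧ (0<a*c ∧ 0<b*d)) ∧
     ¬((a*b<0 ∧ c*d<0) ∧ (b*c<0 ∧ a*d<0)) ∧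
     ¬((0<a*c ∧ 0<b*d) ∧ (b*c<0 ∧ a*d<0))) ∧
    (((a*b<0 ∧ c*d<0) ∨ (0<a*c ∧ 0<b*d) ∨ (b*c<0 ∧ a*d<0)) ↔
      (¬(0<c*d ∧ b*d<0 ∧ 0<a*d) ∧ ¬(0<d*c ∧ 0<b*c ∧ a*c<0) ∧
       ¬(d*b<0 ∧ 0<c*b ∧ 0<a*b) ∧ ¬(0<d*a ∧ c*a<0 ∧ 0<b*a))) := by
  rcases ha.lt_or_gt with ha' | ha' <;> rcases hb.lt_or_gt with hb' | hb' <;>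
    rcases hc.lt_or_gt with hc' | hc' <;> rcases hd.lt_or_gt with hd' | hd'
  · have hpab : 0 < a*b := mul_pos_of_neg_of_neg ha' hb'
    have hnab : ¬ a*b < 0 := asymm hpab
    have hpac : 0 < a*c := mul_pos_of_neg_of_neg ha' hc'
    have hnac : ¬ a*c < 0 := asymm hpac
    have hpad : 0 < a*d := mul_pos_of_neg_of_neg ha' hd'
    have hnad : ¬ a*d < 0 := asymm hpad
    have hpbc : 0 < b*c := mul_pos_of_neg_of_neg hb' hc'
    have hnbc : ¬ b*c < 0 := asymm hpbc
    have hpbd : 0 < b*d := mul_pos_of_neg_of_neg hb' hd'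
    have hnbd : ¬ b*d < 0 := asymm hpbd
    have hpcd : 0 < c*d := mul_pos_of_neg_of_neg hc' hd'
    have hncd : ¬ c*d < 0 := asymm hpcd
    have hpba : 0 < b*a := mul_pos_of_neg_of_neg hb' ha'
    have hnba : ¬ b*a < 0 := asymm hpba
    have hpca : 0 < c*a := mul_pos_of_neg_of_neg hc' ha'
    have hnca : ¬ c*a < 0 := asymm hpca
    have hpda : 0 < d*a := mul_pos_of_neg_of_neg hd' ha'
    have hnda : ¬ d*a < 0 := asymm hpda
    have hpcb : 0 < c*b := mul_pos_of_neg_of_neg hc' hb'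
    have hncb : ¬ c*b < 0 := asymm hpcb
    have hpdb : 0 < d*b := mul_pos_of_neg_of_neg hd' hb'
    have hndb : ¬ d*b < 0 := asymm hpdb
    have hpdc : 0 < d*c := mul_pos_of_neg_of_neg hd' hc'
    have hndc : ¬ d*c < 0 := asymm hpdc
    simp only [hpab, hnab, hpac, hnac, hpad, hnad, hpbc, hnbc, hpbd, hnbd, hpcd, hncd, hpba, hnba, hpca, hnca, hpda, hnda, hpcb, hncb, hpdb, hndb, hpdc, hndc, true_and, and_true, false_and, and_false, not_false_iff, not_true, or_true, true_or, or_false, false_or, iff_true, true_iff, false_iff, iff_false, not_and, and_imp]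
    try exact fun h => absurd h (by tauto)
    try tauto
  · have hpab : 0 < a*b := mul_pos_of_neg_of_neg ha' hb'
    have hnab : ¬ a*b < 0 := asymm hpab
    have hpac : 0 < a*c := mul_pos_of_neg_of_neg ha' hc'
    have hnac : ¬ a*c < 0 := asymm hpac
    have hmad : a*d < 0 := mul_neg_of_neg_of_pos ha' hd'
    have hnad : ¬ 0 < a*d := asymm hmad
    have hpbc : 0 < b*c := mul_pos_of_neg_of_neg hb' hc'
    have hnbc : ¬ b*c < 0 := asymm hpbc
    have hmbd : b*d < 0 := mul_neg_of_neg_of_pos hb' hd'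
    have hnbd : ¬ 0 < b*d := asymm hmbd
    have hmcd : c*d < 0 := mul_neg_of_neg_of_pos hc' hd'
    have hncd : ¬ 0 < c*d := asymm hmcd
    have hpba : 0 < b*a := mul_pos_of_neg_of_neg hb' ha'
    have hnba : ¬ b*a < 0 := asymm hpba
    have hpca : 0 < c*a := mul_pos_of_neg_of_neg hc' ha'
    have hnca : ¬ c*a < 0 := asymm hpca
    have hmda : d*a < 0 := mul_neg_of_pos_of_neg hd' ha'
    have hnda : ¬ 0 < d*a := asymm hmda
    have hpcb : 0 < c*b := mul_pos_of_neg_of_neg hc' hb'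
    have hncb : ¬ c*b < 0 := asymm hpcb
    have hmdb : d*b < 0 := mul_neg_of_pos_of_neg hd' hb'
    have hndb : ¬ 0 < d*b := asymm hmdb
    have hmdc : d*c < 0 := mul_neg_of_pos_of_neg hd' hc'
    have hndc : ¬ 0 < d*c := asymm hmdc
    simp only [hpab, hnab, hpac, hnac, hmad, hnad, hpbc, hnbc, hmbd, hnbd, hmcd, hncd, hpba, hnba, hpca, hnca, hmda, hnda, hpcb, hncb, hmdb, hndb, hmdc, hndc, true_and, and_true, false_and, and_false, not_false_iff, not_true, or_true, true_or, or_false, false_or, iff_true, true_iff, false_iff, iff_false, not_and, and_imp]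
    try exact fun h => absurd h (by tauto)
    try tauto
  · have hpab : 0 < a*b := mul_pos_of_neg_of_neg ha' hb'
    have hnab : ¬ a*b < 0 := asymm hpab
    have hmac : a*c < 0 := mul_neg_of_neg_of_pos ha' hc'
    have hnac : ¬ 0 < a*c := asymm hmac
    have hpad : 0 < a*d := mul_pos_of_neg_of_neg ha' hd'
    have hnad : ¬ a*d < 0 := asymm hpad
    have hmbc : b*c < 0 := mul_neg_of_neg_of_pos hb' hc'
    have hnbc : ¬ 0 < b*c := asymm hmbc
    have hpbd : 0 < b*d := mul_pos_of_neg_of_neg hb' hd'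
    have hnbd : ¬ b*d < 0 := asymm hpbd
    have hmcd : c*d < 0 := mul_neg_of_pos_of_neg hc' hd'
    have hncd : ¬ 0 < c*d := asymm hmcd
    have hpba : 0 < b*a := mul_pos_of_neg_of_neg hb' ha'
    have hnba : ¬ b*a < 0 := asymm hpba
    have hmca : c*a < 0 := mul_neg_of_pos_of_neg hc' ha'
    have hnca : ¬ 0 < c*a := asymm hmca
    have hpda : 0 < d*a := mul_pos_of_neg_of_neg hd' ha'
    have hnda : ¬ d*a < 0 := asymm hpda
    have hmcb : c*b < 0 := mul_neg_of_pos_of_neg hc' hb'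
    have hncb : ¬ 0 < c*b := asymm hmcb
    have hpdb : 0 < d*b := mul_pos_of_neg_of_neg hd' hb'
    have hndb : ¬ d*b < 0 := asymm hpdb
    have hmdc : d*c < 0 := mul_neg_of_neg_of_pos hd' hc'
    have hndc : ¬ 0 < d*c := asymm hmdc
    simp only [hpab, hnab, hmac, hnac, hpad, hnad, hmbc, hnbc, hpbd, hnbd, hmcd, hncd, hpba, hnba, hmca, hnca, hpda, hnda, hmcb, hncb, hpdb, hndb, hmdc, hndc, true_and, and_true, false_and, and_false, not_false_iff, not_true, or_true, true_or, or_false, false_or, iff_true, true_iff, false_iff, iff_false, not_and, and_imp]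
    try exact fun h => absurd h (by tauto)
    try tauto
  · have hpab : 0 < a*b := mul_pos_of_neg_of_neg ha' hb'
    have hnab : ¬ a*b < 0 := asymm hpab
    have hmac : a*c < 0 := mul_neg_of_neg_of_pos ha' hc'
    have hnac : ¬ 0 < a*c := asymm hmac
    have hmad : a*d < 0 := mul_neg_of_neg_of_pos ha' hd'
    have hnad : ¬ 0 < a*d := asymm hmad
    have hmbc : b*c < 0 := mul_neg_of_neg_of_pos hb' hc'
    have hnbc : ¬ 0 < b*c := asymm hmbc
    have hmbd : b*d < 0 := mul_neg_of_neg_of_pos hb' hd'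
    have hnbd : ¬ 0 < b*d := asymm hmbd
    have hpcd : 0 < c*d := mul_pos hc' hd'
    have hncd : ¬ c*d < 0 := asymm hpcd
    have hpba : 0 < b*a := mul_pos_of_neg_of_neg hb' ha'
    have hnba : ¬ b*a < 0 := asymm hpba
    have hmca : c*a < 0 := mul_neg_of_pos_of_neg hc' ha'
    have hnca : ¬ 0 < c*a := asymm hmca
    have hmda : d*a < 0 := mul_neg_of_pos_of_neg hd' ha'
    have hnda : ¬ 0 < d*a := asymm hmda
    have hmcb : c*b < 0 := mul_neg_of_pos_of_neg hc' hb'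
    have hncb : ¬ 0 < c*b := asymm hmcb
    have hmdb : d*b < 0 := mul_neg_of_pos_of_neg hd' hb'
    have hndb : ¬ 0 < d*b := asymm hmdb
    have hpdc : 0 < d*c := mul_pos hd' hc'
    have hndc : ¬ d*c < 0 := asymm hpdc
    simp only [hpab, hnab, hmac, hnac, hmad, hnad, hmbc, hnbc, hmbd, hnbd, hpcd, hncd, hpba, hnba, hmca, hnca, hmda, hnda, hmcb, hncb, hmdb, hndb, hpdc, hndc, true_and, and_true, false_and, and_false, not_false_iff, not_true, or_true, true_or, or_false, false_or, iff_true, true_iff, false_iff, iff_false, not_and, and_imp]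
    try exact fun h => absurd h (by tauto)
    try tauto
  · have hmab : a*b < 0 := mul_neg_of_neg_of_pos ha' hb'
    have hnab : ¬ 0 < a*b := asymm hmab
    have hpac : 0 < a*c := mul_pos_of_neg_of_neg ha' hc'
    have hnac : ¬ a*c < 0 := asymm hpac
    have hpad : 0 < a*d := mul_pos_of_neg_of_neg ha' hd'
    have hnad : ¬ a*d < 0 := asymm hpad
    have hmbc : b*c < 0 := mul_neg_of_pos_of_neg hb' hc'
    have hnbc : ¬ 0 < b*c := asymm hmbc
    have hmbd : b*d < 0 := mul_neg_of_pos_of_neg hb' hd'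
    have hnbd : ¬ 0 < b*d := asymm hmbd
    have hpcd : 0 < c*d := mul_pos_of_neg_of_neg hc' hd'
    have hncd : ¬ c*d < 0 := asymm hpcd
    have hmba : b*a < 0 := mul_neg_of_pos_of_neg hb' ha'
    have hnba : ¬ 0 < b*a := asymm hmba
    have hpca : 0 < c*a := mul_pos_of_neg_of_neg hc' ha'
    have hnca : ¬ c*a < 0 := asymm hpca
    have hpda : 0 < d*a := mul_pos_of_neg_of_neg hd' ha'
    have hnda : ¬ d*a < 0 := asymm hpda
    have hmcb : c*b < 0 := mul_neg_of_neg_of_pos hc' hb'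
    have hncb : ¬ 0 < c*b := asymm hmcb
    have hmdb : d*b < 0 := mul_neg_of_neg_of_pos hd' hb'
    have hndb : ¬ 0 < d*b := asymm hmdb
    have hpdc : 0 < d*c := mul_pos_of_neg_of_neg hd' hc'
    have hndc : ¬ d*c < 0 := asymm hpdc
    simp only [hmab, hnab, hpac, hnac, hpad, hnad, hmbc, hnbc, hmbd, hnbd, hpcd, hncd, hmba, hnba, hpca, hnca, hpda, hnda, hmcb, hncb, hmdb, hndb, hpdc, hndc, true_and, and_true, false_and, and_false, not_false_iff, not_true, or_true, true_or, or_false, false_or, iff_true, true_iff, false_iff, iff_false, not_and, and_imp]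
    try exact fun h => absurd h (by tauto)
    try tauto
  · exfalso; linarith
  · have hmab : a*b < 0 := mul_neg_of_neg_of_pos ha' hb'
    have hnab : ¬ 0 < a*b := asymm hmab
    have hmac : a*c < 0 := mul_neg_of_neg_of_pos ha' hc'
    have hnac : ¬ 0 < a*c := asymm hmac
    have hpad : 0 < a*d := mul_pos_of_neg_of_neg ha' hd'
    have hnad : ¬ a*d < 0 := asymm hpad
    have hpbc : 0 < b*c := mul_pos hb' hc'
    have hnbc : ¬ b*c < 0 := asymm hpbc
    have hmbd : b*d < 0 := mul_neg_of_pos_of_neg hb' hd'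
    have hnbd : ¬ 0 < b*d := asymm hmbd
    have hmcd : c*d < 0 := mul_neg_of_pos_of_neg hc' hd'
    have hncd : ¬ 0 < c*d := asymm hmcd
    have hmba : b*a < 0 := mul_neg_of_pos_of_neg hb' ha'
    have hnba : ¬ 0 < b*a := asymm hmba
    have hmca : c*a < 0 := mul_neg_of_pos_of_neg hc' ha'
    have hnca : ¬ 0 < c*a := asymm hmca
    have hpda : 0 < d*a := mul_pos_of_neg_of_neg hd' ha'
    have hnda : ¬ d*a < 0 := asymm hpda
    have hpcb : 0 < c*b := mul_pos hc' hb'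
    have hncb : ¬ c*b < 0 := asymm hpcb
    have hmdb : d*b < 0 := mul_neg_of_neg_of_pos hd' hb'
    have hndb : ¬ 0 < d*b := asymm hmdb
    have hmdc : d*c < 0 := mul_neg_of_neg_of_pos hd' hc'
    have hndc : ¬ 0 < d*c := asymm hmdc
    simp only [hmab, hnab, hmac, hnac, hpad, hnad, hpbc, hnbc, hmbd, hnbd, hmcd, hncd, hmba, hnba, hmca, hnca, hpda, hnda, hpcb, hncb, hmdb, hndb, hmdc, hndc, true_and, and_true, false_and, and_false, not_false_iff, not_true, or_true, true_or, or_false, false_or, iff_true, true_iff, false_iff, iff_false, not_and, and_imp]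
    try exact fun h => absurd h (by tauto)
    try tauto
  · have hmab : a*b < 0 := mul_neg_of_neg_of_pos ha' hb'
    have hnab : ¬ 0 < a*b := asymm hmab
    have hmac : a*c < 0 := mul_neg_of_neg_of_pos ha' hc'
    have hnac : ¬ 0 < a*c := asymm hmac
    have hmad : a*d < 0 := mul_neg_of_neg_of_pos ha' hd'
    have hnad : ¬ 0 < a*d := asymm hmad
    have hpbc : 0 < b*c := mul_pos hb' hc'
    have hnbc : ¬ b*c < 0 := asymm hpbc
    have hpbd : 0 < b*d := mul_pos hb' hd'
    have hnbd : ¬ b*d < 0 := asymm hpbd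
    have hpcd : 0 < c*d := mul_pos hc' hd'
    have hncd : ¬ c*d < 0 := asymm hpcd
    have hmba : b*a < 0 := mul_neg_of_pos_of_neg hb' ha'
    have hnba : ¬ 0 < b*a := asymm hmba
    have hmca : c*a < 0 := mul_neg_of_pos_of_neg hc' ha'
    have hnca : ¬ 0 < c*a := asymm hmca
    have hmda : d*a < 0 := mul_neg_of_pos_of_neg hd' ha'
    have hnda : ¬ 0 < d*a := asymm hmda
    have hpcb : 0 < c*b := mul_pos hc' hb'
    have hncb : ¬ c*b < 0 := asymm hpcb
    have hpdb : 0 < d*b := mul_pos hd' hb'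
    have hndb : ¬ d*b < 0 := asymm hpdb
    have hpdc : 0 < d*c := mul_pos hd' hc'
    have hndc : ¬ d*c < 0 := asymm hpdc
    simp only [hmab, hnab, hmac, hnac, hmad, hnad, hpbc, hnbc, hpbd, hnbd, hpcd, hncd, hmba, hnba, hmca, hnca, hmda, hnda, hpcb, hncb, hpdb, hndb, hpdc, hndc, true_and, and_true, false_and, and_false, not_false_iff, not_true, or_true, true_or, or_false, false_or, iff_true, true_iff, false_iff, iff_false, not_and, and_imp]
    try exact fun h => absurd h (by tauto)
    try tauto
  · have hmab : a*b < 0 := mul_neg_of_pos_of_neg ha' hb'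
    have hnab : ¬ 0 < a*b := asymm hmab
    have hmac : a*c < 0 := mul_neg_of_pos_of_neg ha' hc'
    have hnac : ¬ 0 < a*c := asymm hmac
    have hmad : a*d < 0 := mul_neg_of_pos_of_neg ha' hd'
    have hnad : ¬ 0 < a*d := asymm hmad
    have hpbc : 0 < b*c := mul_pos_of_neg_of_neg hb' hc'
    have hnbc : ¬ b*c < 0 := asymm hpbc
    have hpbd : 0 < b*d := mul_pos_of_neg_of_neg hb' hd'
    have hnbd : ¬ b*d < 0 := asymm hpbd
    have hpcd : 0 < c*d := mul_pos_of_neg_of_neg hc' hd'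
    have hncd : ¬ c*d < 0 := asymm hpcd
    have hmba : b*a < 0 := mul_neg_of_neg_of_pos hb' ha'
    have hnba : ¬ 0 < b*a := asymm hmba
    have hmca : c*a < 0 := mul_neg_of_neg_of_pos hc' ha'
    have hnca : ¬ 0 < c*a := asymm hmca
    have hmda : d*a < 0 := mul_neg_of_neg_of_pos hd' ha'
    have hnda : ¬ 0 < d*a := asymm hmda
    have hpcb : 0 < c*b := mul_pos_of_neg_of_neg hc' hb'
    have hncb : ¬ c*b < 0 := asymm hpcb
    have hpdb : 0 < d*b := mul_pos_of_neg_of_neg hd' hb'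
    have hndb : ¬ d*b < 0 := asymm hpdb
    have hpdc : 0 < d*c := mul_pos_of_neg_of_neg hd' hc'
    have hndc : ¬ d*c < 0 := asymm hpdc
    simp only [hmab, hnab, hmac, hnac, hmad, hnad, hpbc, hnbc, hpbd, hnbd, hpcd, hncd, hmba, hnba, hmca, hnca, hmda, hnda, hpcb, hncb, hpdb, hndb, hpdc, hndc, true_and, and_true, false_and, and_false, not_false_iff, not_true, or_true, true_or, or_false, false_or, iff_true, true_iff, false_iff, iff_false, not_and, and_imp]
    try exact fun h => absurd h (by tauto)
    try tauto
  · have hmab : a*b < 0 := mul_neg_of_pos_of_neg ha' hb'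
    have hnab : ¬ 0 < a*b := asymm hmab
    have hmac : a*c < 0 := mul_neg_of_pos_of_neg ha' hc'
    have hnac : ¬ 0 < a*c := asymm hmac
    have hpad : 0 < a*d := mul_pos ha' hd'
    have hnad : ¬ a*d < 0 := asymm hpad
    have hpbc : 0 < b*c := mul_pos_of_neg_of_neg hb' hc'
    have hnbc : ¬ b*c < 0 := asymm hpbc
    have hmbd : b*d < 0 := mul_neg_of_neg_of_pos hb' hd'
    have hnbd : ¬ 0 < b*d := asymm hmbd
    have hmcd : c*d < 0 := mul_neg_of_neg_of_pos hc' hd'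
    have hncd : ¬ 0 < c*d := asymm hmcd
    have hmba : b*a < 0 := mul_neg_of_neg_of_pos hb' ha'
    have hnba : ¬ 0 < b*a := asymm hmba
    have hmca : c*a < 0 := mul_neg_of_neg_of_pos hc' ha'
    have hnca : ¬ 0 < c*a := asymm hmca
    have hpda : 0 < d*a := mul_pos hd' ha'
    have hnda : ¬ d*a < 0 := asymm hpda
    have hpcb : 0 < c*b := mul_pos_of_neg_of_neg hc' hb'
    have hncb : ¬ c*b < 0 := asymm hpcb
    have hmdb : d*b < 0 := mul_neg_of_pos_of_neg hd' hb'
    have hndb : ¬ 0 < d*b := asymm hmdb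
    have hmdc : d*c < 0 := mul_neg_of_pos_of_neg hd' hc'
    have hndc : ¬ 0 < d*c := asymm hmdc
    simp only [hmab, hnab, hmac, hnac, hpad, hnad, hpbc, hnbc, hmbd, hnbd, hmcd, hncd, hmba, hnba, hmca, hnca, hpda, hnda, hpcb, hncb, hmdb, hndb, hmdc, hndc, true_and, and_true, false_and, and_false, not_false_iff, not_true, or_true, true_or, or_false, false_or, iff_true, true_iff, false_iff, iff_false, not_and, and_imp]
    try exact fun h => absurd h (by tauto)
    try tauto
  · exfalso; linarith
  · have hmab : a*b < 0 := mul_neg_of_pos_of_neg ha' hb'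
    have hnab : ¬ 0 < a*b := asymm hmab
    have hpac : 0 < a*c := mul_pos ha' hc'
    have hnac : ¬ a*c < 0 := asymm hpac
    have hpad : 0 < a*d := mul_pos ha' hd'
    have hnad : ¬ a*d < 0 := asymm hpad
    have hmbc : b*c < 0 := mul_neg_of_neg_of_pos hb' hc'
    have hnbc : ¬ 0 < b*c := asymm hmbc
    have hmbd : b*d < 0 := mul_neg_of_neg_of_pos hb' hd'
    have hnbd : ¬ 0 < b*d := asymm hmbd
    have hpcd : 0 < c*d := mul_pos hc' hd'
    have hncd : ¬ c*d < 0 := asymm hpcd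
    have hmba : b*a < 0 := mul_neg_of_neg_of_pos hb' ha'
    have hnba : ¬ 0 < b*a := asymm hmba
    have hpca : 0 < c*a := mul_pos hc' ha'
    have hnca : ¬ c*a < 0 := asymm hpca
    have hpda : 0 < d*a := mul_pos hd' ha'
    have hnda : ¬ d*a < 0 := asymm hpda
    have hmcb : c*b < 0 := mul_neg_of_pos_of_neg hc' hb'
    have hncb : ¬ 0 < c*b := asymm hmcb
    have hmdb : d*b < 0 := mul_neg_of_pos_of_neg hd' hb'
    have hndb : ¬ 0 < d*b := asymm hmdb
    have hpdc : 0 < d*c := mul_pos hd' hc'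
    have hndc : ¬ d*c < 0 := asymm hpdc
    simp only [hmab, hnab, hpac, hnac, hpad, hnad, hmbc, hnbc, hmbd, hnbd, hpcd, hncd, hmba, hnba, hpca, hnca, hpda, hnda, hmcb, hncb, hmdb, hndb, hpdc, hndc, true_and, and_true, false_and, and_false, not_false_iff, not_true, or_true, true_or, or_false, false_or, iff_true, true_iff, false_iff, iff_false, not_and, and_imp]
    try exact fun h => absurd h (by tauto)
    try tauto
  · have hpab : 0 < a*b := mul_pos ha' hb'
    have hnab : ¬ a*b < 0 := asymm hpab
    have hmac : a*c < 0 := mul_neg_of_pos_of_neg ha' hc'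
    have hnac : ¬ 0 < a*c := asymm hmac
    have hmad : a*d < 0 := mul_neg_of_pos_of_neg ha' hd'
    have hnad : ¬ 0 < a*d := asymm hmad
    have hmbc : b*c < 0 := mul_neg_of_pos_of_neg hb' hc'
    have hnbc : ¬ 0 < b*c := asymm hmbc
    have hmbd : b*d < 0 := mul_neg_of_pos_of_neg hb' hd'
    have hnbd : ¬ 0 < b*d := asymm hmbd
    have hpcd : 0 < c*d := mul_pos_of_neg_of_neg hc' hd'
    have hncd : ¬ c*d < 0 := asymm hpcd
    have hpba : 0 < b*a := mul_pos hb' ha'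
    have hnba : ¬ b*a < 0 := asymm hpba
    have hmca : c*a < 0 := mul_neg_of_neg_of_pos hc' ha'
    have hnca : ¬ 0 < c*a := asymm hmca
    have hmda : d*a < 0 := mul_neg_of_neg_of_pos hd' ha'
    have hnda : ¬ 0 < d*a := asymm hmda
    have hmcb : c*b < 0 := mul_neg_of_neg_of_pos hc' hb'
    have hncb : ¬ 0 < c*b := asymm hmcb
    have hmdb : d*b < 0 := mul_neg_of_neg_of_pos hd' hb'
    have hndb : ¬ 0 < d*b := asymm hmdb
    have hpdc : 0 < d*c := mul_pos_of_neg_of_neg hd' hc'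
    have hndc : ¬ d*c < 0 := asymm hpdc
    simp only [hpab, hnab, hmac, hnac, hmad, hnad, hmbc, hnbc, hmbd, hnbd, hpcd, hncd, hpba, hnba, hmca, hnca, hmda, hnda, hmcb, hncb, hmdb, hndb, hpdc, hndc, true_and, and_true, false_and, and_false, not_false_iff, not_true, or_true, true_or, or_false, false_or, iff_true, true_iff, false_iff, iff_false, not_and, and_imp]
    try exact fun h => absurd h (by tauto)
    try tauto
  · have hpab : 0 < a*b := mul_pos ha' hb'
    have hnab : ¬ a*b < 0 := asymm hpab
    have hmac : a*c < 0 := mul_neg_of_pos_of_neg ha' hc'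
    have hnac : ¬ 0 < a*c := asymm hmac
    have hpad : 0 < a*d := mul_pos ha' hd'
    have hnad : ¬ a*d < 0 := asymm hpad
    have hmbc : b*c < 0 := mul_neg_of_pos_of_neg hb' hc'
    have hnbc : ¬ 0 < b*c := asymm hmbc
    have hpbd : 0 < b*d := mul_pos hb' hd'
    have hnbd : ¬ b*d < 0 := asymm hpbd
    have hmcd : c*d < 0 := mul_neg_of_neg_of_pos hc' hd'
    have hncd : ¬ 0 < c*d := asymm hmcd
    have hpba : 0 < b*a := mul_pos hb' ha'
    have hnba : ¬ b*a < 0 := asymm hpba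
    have hmca : c*a < 0 := mul_neg_of_neg_of_pos hc' ha'
    have hnca : ¬ 0 < c*a := asymm hmca
    have hpda : 0 < d*a := mul_pos hd' ha'
    have hnda : ¬ d*a < 0 := asymm hpda
    have hmcb : c*b < 0 := mul_neg_of_neg_of_pos hc' hb'
    have hncb : ¬ 0 < c*b := asymm hmcb
    have hpdb : 0 < d*b := mul_pos hd' hb'
    have hndb : ¬ d*b < 0 := asymm hpdb
    have hmdc : d*c < 0 := mul_neg_of_pos_of_neg hd' hc'
    have hndc : ¬ 0 < d*c := asymm hmdc
    simp only [hpab, hnab, hmac, hnac, hpad, hnad, hmbc, hnbc, hpbd, hnbd, hmcd, hncd, hpba, hnba, hmca, hnca, hpda, hnda, hmcb, hncb, hpdb, hndb, hmdc, hndc, true_and, and_true, false_and, and_false, not_false_iff, not_true, or_true, true_or, or_false, false_or, iff_true, true_iff, false_iff, iff_false, not_and, and_imp]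
    try exact fun h => absurd h (by tauto)
    try tauto
  · have hpab : 0 < a*b := mul_pos ha' hb'
    have hnab : ¬ a*b < 0 := asymm hpab
    have hpac : 0 < a*c := mul_pos ha' hc'
    have hnac : ¬ a*c < 0 := asymm hpac
    have hmad : a*d < 0 := mul_neg_of_pos_of_neg ha' hd'
    have hnad : ¬ 0 < a*d := asymm hmad
    have hpbc : 0 < b*c := mul_pos hb' hc'
    have hnbc : ¬ b*c < 0 := asymm hpbc
    have hmbd : b*d < 0 := mul_neg_of_pos_of_neg hb' hd'
    have hnbd : ¬ 0 < b*d := asymm hmbd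
    have hmcd : c*d < 0 := mul_neg_of_pos_of_neg hc' hd'
    have hncd : ¬ 0 < c*d := asymm hmcd
    have hpba : 0 < b*a := mul_pos hb' ha'
    have hnba : ¬ b*a < 0 := asymm hpba
    have hpca : 0 < c*a := mul_pos hc' ha'
    have hnca : ¬ c*a < 0 := asymm hpca
    have hmda : d*a < 0 := mul_neg_of_neg_of_pos hd' ha'
    have hnda : ¬ 0 < d*a := asymm hmda
    have hpcb : 0 < c*b := mul_pos hc' hb'
    have hncb : ¬ c*b < 0 := asymm hpcb
    have hmdb : d*b < 0 := mul_neg_of_neg_of_pos hd' hb'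
    have hndb : ¬ 0 < d*b := asymm hmdb
    have hmdc : d*c < 0 := mul_neg_of_neg_of_pos hd' hc'
    have hndc : ¬ 0 < d*c := asymm hmdc
    simp only [hpab, hnab, hpac, hnac, hmad, hnad, hpbc, hnbc, hmbd, hnbd, hmcd, hncd, hpba, hnba, hpca, hnca, hmda, hnda, hpcb, hncb, hmdb, hndb, hmdc, hndc, true_and, and_true, false_and, and_false, not_false_iff, not_true, or_true, true_or, or_false, false_or, iff_true, true_iff, false_iff, iff_false, not_and, and_imp]
    try exact fun h => absurd h (by tauto)
    try tauto
  · have hpab : 0 < a*b := mul_pos ha' hb'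
    have hnab : ¬ a*b < 0 := asymm hpab
    have hpac : 0 < a*c := mul_pos ha' hc'
    have hnac : ¬ a*c < 0 := asymm hpac
    have hpad : 0 < a*d := mul_pos ha' hd'
    have hnad : ¬ a*d < 0 := asymm hpad
    have hpbc : 0 < b*c := mul_pos hb' hc'
    have hnbc : ¬ b*c < 0 := asymm hpbc
    have hpbd : 0 < b*d := mul_pos hb' hd'
    have hnbd : ¬ b*d < 0 := asymm hpbd
    have hpcd : 0 < c*d := mul_pos hc' hd'
    have hncd : ¬ c*d < 0 := asymm hpcd
    have hpba : 0 < b*a := mul_pos hb' ha'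
    have hnba : ¬ b*a < 0 := asymm hpba
    have hpca : 0 < c*a := mul_pos hc' ha'
    have hnca : ¬ c*a < 0 := asymm hpca
    have hpda : 0 < d*a := mul_pos hd' ha'
    have hnda : ¬ d*a < 0 := asymm hpda
    have hpcb : 0 < c*b := mul_pos hc' hb'
    have hncb : ¬ c*b < 0 := asymm hpcb
    have hpdb : 0 < d*b := mul_pos hd' hb'
    have hndb : ¬ d*b < 0 := asymm hpdb
    have hpdc : 0 < d*c := mul_pos hd' hc'
    have hndc : ¬ d*c < 0 := asymm hpdc
    simp only [hpab, hnab, hpac, hnac, hpad, hnad, hpbc, hnbc, hpbd, hnbd, hpcd, hncd, hpba, hnba, hpca, hnca, hpda, hnda, hpcb, hncb, hpdb, hndb, hpdc, hndc, true_and, and_true, false_and, and_false, not_false_iff, not_true, or_true, true_or, or_false, false_or, iff_true, true_iff, false_iff, iff_false, not_and, and_imp]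
    try exact fun h => absurd h (by tauto)
    try tauto

set_option maxHeartbeats 1600000 in
/-- For four distinct points in general position, among the three partitions of the four
points into two pairs, at most one has crossing open segments, and exactly one has crossing
open segments iff the four points are in convex position. -/
theorem four_points_crossing_partition (p₁ p₂ p₃ p₄ : ℝ × ℝ)
    (h₁₂ : p₁ ≠ p₂) (h₁₃ : p₁ ≠ p₃) (h₁₄ : p₁ ≠ p₄)
    (h₂₃ : p₂ ≠ p₃) (h₂₄ : p₂ ≠ p₄) (h₃₄ : p₃ ≠ p₄)
    (hgp : GenPos {p₁, p₂, p₃, p₄}) :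
    (¬ (SegCross p₁ p₂ p₃ p₄ ∧ SegCross p₁ p₃ p₂ p₄) ∧
     ¬ (SegCross p₁ p₂ p₃ p₄ ∧ SegCross p₁ p₄ p₂ p₃) ∧
     ¬ (SegCross p₁ p₃ p₂ p₄ ∧ SegCross p₁ p₄ p₂ p₃)) ∧
    ((SegCross p₁ p₂ p₃ p₄ ∨ SegCross p₁ p₃ p₂ p₄ ∨ SegCross p₁ p₄ p₂ p₃) ↔
      ConvexPos {p₁, p₂, p₃, p₄}) := by
  have m1 : p₁ ∈ ({p₁, p₂, p₃, p₄} : Set (ℝ × ℝ)) := by simp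
  have m2 : p₂ ∈ ({p₁, p₂, p₃, p₄} : Set (ℝ × ℝ)) := by simp
  have m3 : p₃ ∈ ({p₁, p₂, p₃, p₄} : Set (ℝ × ℝ)) := by simp
  have m4 : p₄ ∈ ({p₁, p₂, p₃, p₄} : Set (ℝ × ℝ)) := by simp
  have hd1 : odet p₁ p₂ p₃ ≠ 0 := hgp p₁ m1 p₂ m2 p₃ m3 h₁₂ h₁₃ h₂₃
  have hd2 : odet p₁ p₂ p₄ ≠ 0 := hgp p₁ m1 p₂ m2 p₄ m4 h₁₂ h₁₄ h₂₄
  have hd3 : odet p₁ p₃ p₄ ≠ 0 := hgp p₁ m1 p₃ m3 p₄ m4 h₁₃ h₁₄ h₃₄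
  have hd4 : odet p₂ p₃ p₄ ≠ 0 := hgp p₂ m2 p₃ m3 p₄ m4 h₂₃ h₂₄ h₃₄
  have hrel : odet p₁ p₂ p₃ - odet p₁ p₂ p₄ + odet p₁ p₃ p₄ - odet p₂ p₃ p₄ = 0 := by
    unfold odet; ring
  -- reordering identities
  have q341 : odet p₃ p₄ p₁ = odet p₁ p₃ p₄ := by unfold odet; ring
  have q342 : odet p₃ p₄ p₂ = odet p₂ p₃ p₄ := by unfold odet; ring
  have q132 : odet p₁ p₃ p₂ = -odet p₁ p₂ p₃ := by unfold odet; ring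
  have q241 : odet p₂ p₄ p₁ = odet p₁ p₂ p₄ := by unfold odet; ring
  have q243 : odet p₂ p₄ p₃ = -odet p₂ p₃ p₄ := by unfold odet; ring
  have q142 : odet p₁ p₄ p₂ = -odet p₁ p₂ p₄ := by unfold odet; ring
  have q143 : odet p₁ p₄ p₃ = -odet p₁ p₃ p₄ := by unfold odet; ring
  have q231 : odet p₂ p₃ p₁ = odet p₁ p₂ p₃ := by unfold odet; ring
  have q314 : odet p₃ p₁ p₄ = -odet p₁ p₃ p₄ := by unfold odet; ring
  have q413 : odet p₄ p₁ p₃ = odet p₁ p₃ p₄ := by unfold odet; ring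
  have q412 : odet p₄ p₁ p₂ = odet p₁ p₂ p₄ := by unfold odet; ring
  have q421 : odet p₄ p₂ p₁ = -odet p₁ p₂ p₄ := by unfold odet; ring
  -- extra nonzeros
  have hd341 : odet p₃ p₄ p₁ ≠ 0 := by rw [q341]; exact hd3
  have hd342 : odet p₃ p₄ p₂ ≠ 0 := by rw [q342]; exact hd4
  have hd132 : odet p₁ p₃ p₂ ≠ 0 := by rw [q132]; exact neg_ne_zero.2 hd1
  have hd241 : odet p₂ p₄ p₁ ≠ 0 := by rw [q241]; exact hd2
  have hd243 : odet p₂ p₄ p₃ ≠ 0 := by rw [q243]; exact neg_ne_zero.2 hd4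
  have hd142 : odet p₁ p₄ p₂ ≠ 0 := by rw [q142]; exact neg_ne_zero.2 hd2
  have hd143 : odet p₁ p₄ p₃ ≠ 0 := by rw [q143]; exact neg_ne_zero.2 hd3
  have hd231 : odet p₂ p₃ p₁ ≠ 0 := by rw [q231]; exact hd1
  have hd314 : odet p₃ p₁ p₄ ≠ 0 := by rw [q314]; exact neg_ne_zero.2 hd3
  have hd413 : odet p₄ p₁ p₃ ≠ 0 := by rw [q413]; exact hd3
  have hd412 : odet p₄ p₁ p₂ ≠ 0 := by rw [q412]; exact hd2
  have hd421 : odet p₄ p₂ p₁ ≠ 0 := by rw [q421]; exact neg_ne_zero.2 hd2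
  -- set differences
  have hS1 : ({p₁, p₂, p₃, p₄} : Set (ℝ × ℝ)) \ {p₁} = {p₂, p₃, p₄} := by
    ext x
    simp only [Set.mem_diff, Set.mem_insert_iff, Set.mem_singleton_iff]
    constructor
    · rintro ⟨(rfl | rfl | rfl | rfl), h⟩ <;> tauto
    · rintro (rfl | rfl | rfl) <;>
        exact ⟨by tauto, by first | exact h₁₂.symm | exact h₁₃.symm | exact h₁₄.symm⟩
  have hS2 : ({p₁, p₂, p₃, p₄} : Set (ℝ × ℝ)) \ {p₂} = {p₁, p₃, p₄} := by
    ext x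
    simp only [Set.mem_diff, Set.mem_insert_iff, Set.mem_singleton_iff]
    constructor
    · rintro ⟨(rfl | rfl | rfl | rfl), h⟩ <;> tauto
    · rintro (rfl | rfl | rfl) <;>
        exact ⟨by tauto, by first | exact h₁₂ | exact h₂₃.symm | exact h₂₄.symm⟩
  have hS3 : ({p₁, p₂, p₃, p₄} : Set (ℝ × ℝ)) \ {p₃} = {p₁, p₂, p₄} := by
    ext x
    simp only [Set.mem_diff, Set.mem_insert_iff, Set.mem_singleton_iff]
    constructor
    · rintro ⟨(rfl | rfl | rfl | rfl), h⟩ <;> tauto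
    · rintro (rfl | rfl | rfl) <;>
        exact ⟨by tauto, by first | exact h₁₃ | exact h₂₃ | exact h₃₄.symm⟩
  have hS4 : ({p₁, p₂, p₃, p₄} : Set (ℝ × ℝ)) \ {p₄} = {p₁, p₂, p₃} := by
    ext x
    simp only [Set.mem_diff, Set.mem_insert_iff, Set.mem_singleton_iff]
    constructor
    · rintro ⟨(rfl | rfl | rfl | rfl), h⟩ <;> tauto
    · rintro (rfl | rfl | rfl) <;>
        exact ⟨by tauto, by first | exact h₁₄ | exact h₂₄ | exact h₃₄⟩
  have hcp : ConvexPos {p₁, p₂, p₃, p₄} ↔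
      (p₁ ∉ convexHull ℝ ({p₂, p₃, p₄} : Set (ℝ × ℝ)) ∧
       p₂ ∉ convexHull ℝ ({p₁, p₃, p₄} : Set (ℝ × ℝ)) ∧
       p₃ ∉ convexHull ℝ ({p₁, p₂, p₄} : Set (ℝ × ℝ)) ∧
       p₄ ∉ convexHull ℝ ({p₁, p₂, p₃} : Set (ℝ × ℝ))) := by
    constructor
    · intro h
      exact ⟨fun hin => h p₁ m1 (by rw [hS1]; exact hin),
             fun hin => h p₂ m2 (by rw [hS2]; exact hin),
             fun hin => h p₃ m3 (by rw [hS3]; exact hin),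
             fun hin => h p₄ m4 (by rw [hS4]; exact hin)⟩
    · rintro ⟨n1, n2, n3, n4⟩ p hp
      simp only [Set.mem_insert_iff, Set.mem_singleton_iff] at hp
      rcases hp with rfl | rfl | rfl | rfl
      · rw [hS1]; exact n1
      · rw [hS2]; exact n2
      · rw [hS3]; exact n3
      · rw [hS4]; exact n4
  rw [segCross_iff p₁ p₂ p₃ p₄ hd1 hd2 hd341 hd342,
      segCross_iff p₁ p₃ p₂ p₄ hd132 hd3 hd241 hd243,
      segCross_iff p₁ p₄ p₂ p₃ hd142 hd143 hd231 hd4,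
      hcp,
      mem_triangle_iff p₂ p₃ p₄ p₁ hd4 hd231 hd341 hd421,
      mem_triangle_iff p₁ p₃ p₄ p₂ hd3 hd132 hd342 hd412,
      mem_triangle_iff p₁ p₂ p₄ p₃ hd2 hd1 hd243 hd413,
      mem_triangle_iff p₁ p₂ p₃ p₄ hd1 hd2 hd4 hd314,
      q341, q342, q132, q241, q243, q142, q143, q231, q314, q413, q412, q421]
  simp only [neg_mul, mul_neg, neg_neg, neg_lt_zero, neg_pos]
  exact sign_main _ _ _ _ hd1 hd2 hd3 hd4 hrel
end

section
/- Every set of 11 points in the plane in general position has an even number of crossings. -/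
/-- The number of crossings of a planar point set `S`: the number of unordered pairs
`{ {a,b}, {c,d} }` of disjoint two-element subsets of `S` such that the open segment
joining `a` and `b` intersects the open segment joining `c` and `d`. -/
noncomputable def cr (S : Set (ℝ × ℝ)) : ℕ :=
  Nat.card {x : Sym2 (Sym2 (ℝ × ℝ)) //
    ∃ a b c d : ℝ × ℝ, x = s(s(a, b), s(c, d)) ∧
      a ∈ S ∧ b ∈ S ∧ c ∈ S ∧ d ∈ S ∧ a ≠ b ∧ c ≠ d ∧
      ({a, b} : Set (ℝ × ℝ)) ∩ {c, d} = ∅ ∧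
      (openSegment ℝ a b ∩ openSegment ℝ c d).Nonempty}

/-! ### Auxiliary development -/

attribute [local instance] Classical.propDecidable

namespace CrossAux

/-- The crossing relation between segments `ab` and `cd`. -/
def Cross (a b c d : ℝ × ℝ) : Prop :=
  (openSegment ℝ a b ∩ openSegment ℝ c d).Nonempty

/-! #### algebraic facts about `odet` -/

lemma odet_cyc (p q r : ℝ × ℝ) : odet p q r = odet q r p := by
  simp only [odet]; ring

lemma odet_swap12 (p q r : ℝ × ℝ) : odet q p r = -odet p q r := by
  simp only [odet]; ring

lemma odet_swap23 (p q r : ℝ × ℝ) : odet p r q = -odet p q r := by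
  simp only [odet]; ring

lemma odet_self12 (p r : ℝ × ℝ) : odet p p r = 0 := by simp only [odet]; ring

lemma odet_self23 (p r : ℝ × ℝ) : odet p r r = 0 := by simp only [odet]; ring

lemma odet_identity (a b c d : ℝ × ℝ) :
    odet a b c + odet a c d = odet a b d + odet b c d := by
  simp only [odet]; ring

lemma odet_affine (a b c d : ℝ × ℝ) (u v : ℝ) (huv : u + v = 1) :
    odet a b (u • c + v • d) = u * odet a b c + v * odet a b d := by
  have : u = 1 - v := by linarith
  subst this
  simp only [odet, Prod.smul_fst, Prod.smul_snd, Prod.fst_add, Prod.snd_add, smul_eq_mul]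
  ring

/-! #### the segment crossing criterion -/

lemma odet_self13 (p r : ℝ × ℝ) : odet p r p = 0 := by simp only [odet]; ring

lemma point_on_line {a b p : ℝ × ℝ} (hab : a ≠ b) (h : odet a b p = 0) :
    ∃ s : ℝ, p = (1 - s) • a + s • b := by
  obtain ⟨a1, a2⟩ := a
  obtain ⟨b1, b2⟩ := b
  obtain ⟨p1, p2⟩ := p
  simp only [odet] at h
  simp only [Prod.smul_mk, Prod.mk_add_mk, smul_eq_mul, Prod.mk.injEq]
  by_cases h1 : b1 = a1
  · have h2 : b2 ≠ a2 := by
      intro h2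
      exact hab (by simp [Prod.ext_iff, h1.symm, h2.symm])
    have h2' : b2 - a2 ≠ 0 := sub_ne_zero.mpr h2
    have hp1 : p1 = a1 := by
      have hz : (b2 - a2) * (p1 - a1) = 0 := by rw [h1] at h; linarith
      rcases mul_eq_zero.mp hz with h' | h'
      · exact absurd h' h2'
      · linarith
    refine ⟨(p2 - a2) / (b2 - a2), ?_, ?_⟩
    · rw [hp1, h1]; ring
    · field_simp
      ring
  · have h1' : b1 - a1 ≠ 0 := sub_ne_zero.mpr h1
    refine ⟨(p1 - a1) / (b1 - a1), ?_, ?_⟩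
    · field_simp
      ring
    · field_simp
      linear_combination h

lemma cross_iff {a b c d : ℝ × ℝ} (h1 : odet a b c ≠ 0) (h2 : odet a b d ≠ 0)
    (h3 : odet c d a ≠ 0) (h4 : odet c d b ≠ 0) :
    Cross a b c d ↔ odet a b c * odet a b d < 0 ∧ odet c d a * odet c d b < 0 := by
  constructor
  · rintro ⟨p, hp1, hp2⟩
    simp only [openSegment, Set.mem_setOf_eq] at hp1 hp2
    obtain ⟨u, v, hu, hv, huv, hp⟩ := hp1
    obtain ⟨s, t, hs, ht, hst, hq⟩ := hp2
    have e1 : odet a b p = 0 := by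
      rw [← hp, odet_affine a b a b u v huv, odet_self13, odet_self23]; ring
    have e2 : s * odet a b c + t * odet a b d = 0 := by
      rw [← odet_affine a b c d s t hst, hq, e1]
    have e3 : odet c d p = 0 := by
      rw [← hq, odet_affine c d c d s t hst, odet_self13, odet_self23]; ring
    have e4 : u * odet c d a + v * odet c d b = 0 := by
      rw [← odet_affine c d a b u v huv, hp, e3]
    constructor
    · rcases h1.lt_or_gt with hA | hA
      · have hB : 0 < odet a b d := by nlinarith
        exact mul_neg_of_neg_of_pos hA hB
      · have hB : odet a b d < 0 := by nlinarith
        exact mul_neg_of_pos_of_neg hA hB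
    · rcases h3.lt_or_gt with hA | hA
      · have hB : 0 < odet c d b := by nlinarith
        exact mul_neg_of_neg_of_pos hA hB
      · have hB : odet c d b < 0 := by nlinarith
        exact mul_neg_of_pos_of_neg hA hB
  · rintro ⟨hAB, hCD⟩
    have hab : a ≠ b := by
      intro h; rw [h] at h1; exact h1 (odet_self12 b c)
    set A := odet a b c with hA
    set B := odet a b d with hB
    have hABne : A - B ≠ 0 := by
      intro h; have : A = B := by linarith
      rw [this] at hAB; nlinarith [sq_nonneg B]
    set t := A / (A - B) with hT
    have ht0 : 0 < t ∧ t < 1 := by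
      rcases h1.lt_or_gt with hA0 | hA0
      · have hB0 : 0 < B := by nlinarith
        have hden : A - B < 0 := by linarith
        constructor
        · exact div_pos_of_neg_of_neg hA0 hden
        · rw [div_lt_one_iff]
          right; right; exact ⟨hden, by linarith⟩
      · have hB0 : B < 0 := by nlinarith
        have hden : 0 < A - B := by linarith
        constructor
        · exact div_pos hA0 hden
        · rw [div_lt_one hden]; linarith
    set p := (1 - t) • c + t • d with hpdef
    have ep : odet a b p = 0 := by
      rw [hpdef, odet_affine a b c d (1 - t) t (by ring)]
      rw [hT]; field_simp
      rw [← hA, ← hB]; ring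
    obtain ⟨σ, hps⟩ := point_on_line hab ep
    have e2 : odet c d p = 0 := by
      rw [hpdef, odet_affine c d c d (1 - t) t (by ring), odet_self13, odet_self23]; ring
    have e3 : (1 - σ) * odet c d a + σ * odet c d b = 0 := by
      rw [← odet_affine c d a b (1 - σ) σ (by ring), ← hps, e2]
    have hσ0 : 0 < σ := by
      by_contra hcon
      push_neg at hcon
      rcases h3.lt_or_gt with hα | hα
      · have hβ : 0 < odet c d b := by nlinarith
        nlinarith
      · have hβ : odet c d b < 0 := by nlinarith
        nlinarith
    have hσ1 : σ < 1 := by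
      by_contra hcon
      push_neg at hcon
      rcases h3.lt_or_gt with hα | hα
      · have hβ : 0 < odet c d b := by nlinarith
        nlinarith
      · have hβ : odet c d b < 0 := by nlinarith
        nlinarith
    refine ⟨p, ?_, ?_⟩
    · exact ⟨1 - σ, σ, by linarith, hσ0, by ring, hps.symm⟩
    · exact ⟨1 - t, t, by linarith, ht0.1, by ring, rfl⟩

/-- Version of the crossing criterion with all `odet`s in standard order. -/
lemma cross_iff' {a b c d : ℝ × ℝ} (h1 : odet a b c ≠ 0) (h2 : odet a b d ≠ 0)
    (h3 : odet a c d ≠ 0) (h4 : odet b c d ≠ 0) :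
    Cross a b c d ↔ odet a b c * odet a b d < 0 ∧ odet a c d * odet b c d < 0 := by
  have hca : odet c d a = odet a c d := (odet_cyc a c d).symm
  have hcb : odet c d b = odet b c d := (odet_cyc b c d).symm
  rw [cross_iff h1 h2 (by rw [hca]; exact h3) (by rw [hcb]; exact h4), hca, hcb]

/-! #### symmetries of `Cross` -/

lemma Cross.swap1 {a b c d : ℝ × ℝ} (h : Cross a b c d) : Cross b a c d := by
  rwa [Cross, openSegment_symm] at h

lemma Cross.swap2 {a b c d : ℝ × ℝ} (h : Cross a b c d) : Cross a b d c := by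
  rwa [Cross, show openSegment ℝ c d = openSegment ℝ d c from openSegment_symm _ _ _] at h

lemma Cross.swapP {a b c d : ℝ × ℝ} (h : Cross a b c d) : Cross c d a b := by
  rwa [Cross, Set.inter_comm] at h

/-! #### real sign lemmas -/

/-- sign indicator with values in `ZMod 2`. -/
noncomputable def χr (x : ℝ) : ZMod 2 := if x < 0 then 1 else 0

lemma signs_lemma {A B C D : ℝ} (hA : A ≠ 0) (hB : B ≠ 0) (hC : C ≠ 0) (hD : D ≠ 0)
    (hid : A + C = B + D) :
    ((A * B < 0 ∧ C * D < 0) ∨ (A * C > 0 ∧ B * D > 0) ∨ (B * C < 0 ∧ A * D < 0)) ↔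
      χr A + χr B + χr C + χr D = 0 := by
  rcases hA.lt_or_gt with h1 | h1 <;>
  rcases hB.lt_or_gt with h2 | h2 <;>
  rcases hC.lt_or_gt with h3 | h3 <;>
  rcases hD.lt_or_gt with h4 | h4 <;>
  first
  | linarith
  | exact iff_of_true (Or.inl ⟨by nlinarith, by nlinarith⟩)
      (by simp only [χr, h1, h1.asymm, h2, h2.asymm, h3, h3.asymm, h4, h4.asymm, if_true,
            if_false, if_pos, if_neg, not_false_iff]; decide)
  | exact iff_of_true (Or.inr (Or.inl ⟨by nlinarith, by nlinarith⟩))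
      (by simp only [χr, h1, h1.asymm, h2, h2.asymm, h3, h3.asymm, h4, h4.asymm]; decide)
  | exact iff_of_true (Or.inr (Or.inr ⟨by nlinarith, by nlinarith⟩))
      (by simp only [χr, h1, h1.asymm, h2, h2.asymm, h3, h3.asymm, h4, h4.asymm]; decide)
  | exact iff_of_false (by rintro (⟨x, y⟩ | ⟨x, y⟩ | ⟨x, y⟩) <;> nlinarith)
      (by simp only [χr, h1, h1.asymm, h2, h2.asymm, h3, h3.asymm, h4, h4.asymm]; decide)

lemma not_pattern₁ {A B C D : ℝ} (hid : A + C = B + D)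
    (h1 : A * B < 0 ∧ C * D < 0) (h2 : A * C > 0 ∧ B * D > 0) : False := by
  rcases lt_trichotomy A 0 with hA | hA | hA
  · have hC : C < 0 := by nlinarith [h2.1]
    have hB : 0 < B := by nlinarith [h1.1]
    have hD : 0 < D := by nlinarith [h2.2]
    linarith
  · rw [hA] at h1; simp at h1
  · have hC : 0 < C := by nlinarith [h2.1]
    have hB : B < 0 := by nlinarith [h1.1]
    have hD : D < 0 := by nlinarith [h2.2]
    linarith

lemma not_pattern₂ {A B C D : ℝ} (hid : A + C = B + D)
    (h1 : A * B < 0 ∧ C * D < 0) (h2 : B * C < 0 ∧ A * D < 0) : False := by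
  rcases lt_trichotomy A 0 with hA | hA | hA
  · have hB : 0 < B := by nlinarith [h1.1]
    have hC : C < 0 := by nlinarith [h2.1]
    have hD : 0 < D := by nlinarith [h2.2]
    linarith
  · rw [hA] at h1; simp at h1
  · have hB : B < 0 := by nlinarith [h1.1]
    have hC : 0 < C := by nlinarith [h2.1]
    have hD : D < 0 := by nlinarith [h2.2]
    linarith

lemma not_pattern₃ {A B C D : ℝ} (hid : A + C = B + D)
    (h1 : A * C > 0 ∧ B * D > 0) (h2 : B * C < 0 ∧ A * D < 0) : False := by
  rcases lt_trichotomy A 0 with hA | hA | hA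
  · have hC : C < 0 := by nlinarith [h1.1]
    have hD : 0 < D := by nlinarith [h2.2]
    have hB : 0 < B := by nlinarith [h1.2]
    linarith
  · rw [hA] at h1; simp at h1
  · have hC : 0 < C := by nlinarith [h1.1]
    have hD : D < 0 := by nlinarith [h2.2]
    have hB : B < 0 := by nlinarith [h1.2]
    linarith


/-! #### no two different pairings cross -/

lemma noTwo₁ {a b c d : ℝ × ℝ} (hA : odet a b c ≠ 0) (hB : odet a b d ≠ 0)
    (hC : odet a c d ≠ 0) (hD : odet b c d ≠ 0)
    (h1 : Cross a b c d) (h2 : Cross a c b d) : False := by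
  rw [cross_iff' hA hB hC hD] at h1
  rw [cross_iff' (show odet a c b ≠ 0 by rw [odet_swap23 a b c]; simpa using hA) hC
      (show odet a b d ≠ 0 from hB)
      (show odet c b d ≠ 0 by rw [odet_swap12 b c d]; simpa using hD)] at h2
  rw [show odet a c b = -odet a b c from odet_swap23 a b c,
      show odet c b d = -odet b c d from odet_swap12 b c d] at h2
  exact not_pattern₁ (odet_identity a b c d) h1 ⟨by nlinarith [h2.1], by nlinarith [h2.2]⟩

lemma noTwo₂ {a b c d : ℝ × ℝ} (hA : odet a b c ≠ 0) (hB : odet a b d ≠ 0)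
    (hC : odet a c d ≠ 0) (hD : odet b c d ≠ 0)
    (h1 : Cross a b c d) (h2 : Cross a d b c) : False := by
  rw [cross_iff' hA hB hC hD] at h1
  rw [cross_iff' (show odet a d b ≠ 0 by rw [odet_swap23 a b d]; simpa using hB)
      (show odet a d c ≠ 0 by rw [odet_swap23 a c d]; simpa using hC)
      (show odet a b c ≠ 0 from hA)
      (show odet d b c ≠ 0 by rw [odet_cyc d b c]; exact hD)] at h2
  rw [show odet a d b = -odet a b d from odet_swap23 a b d,
      show odet a d c = -odet a c d from odet_swap23 a c d,
      show odet d b c = odet b c d from odet_cyc d b c] at h2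
  exact not_pattern₂ (odet_identity a b c d) h1 ⟨by nlinarith [h2.1], h2.2⟩

lemma noTwo₃ {a b c d : ℝ × ℝ} (hA : odet a b c ≠ 0) (hB : odet a b d ≠ 0)
    (hC : odet a c d ≠ 0) (hD : odet b c d ≠ 0)
    (h1 : Cross a c b d) (h2 : Cross a d b c) : False := by
  rw [cross_iff' (show odet a c b ≠ 0 by rw [odet_swap23 a b c]; simpa using hA) hC
      (show odet a b d ≠ 0 from hB)
      (show odet c b d ≠ 0 by rw [odet_swap12 b c d]; simpa using hD)] at h1
  rw [cross_iff' (show odet a d b ≠ 0 by rw [odet_swap23 a b d]; simpa using hB)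
      (show odet a d c ≠ 0 by rw [odet_swap23 a c d]; simpa using hC)
      (show odet a b c ≠ 0 from hA)
      (show odet d b c ≠ 0 by rw [odet_cyc d b c]; exact hD)] at h2
  rw [show odet a c b = -odet a b c from odet_swap23 a b c,
      show odet c b d = -odet b c d from odet_swap12 b c d] at h1
  rw [show odet a d b = -odet a b d from odet_swap23 a b d,
      show odet a d c = -odet a c d from odet_swap23 a c d,
      show odet d b c = odet b c d from odet_cyc d b c] at h2
  exact not_pattern₃ (odet_identity a b c d)
    ⟨by nlinarith [h1.1], by nlinarith [h1.2]⟩ ⟨by nlinarith [h2.1], h2.2⟩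

/-! #### the four-point crossing parity lemma -/

lemma four_cross_iff {a b c d : ℝ × ℝ} (hA : odet a b c ≠ 0) (hB : odet a b d ≠ 0)
    (hC : odet a c d ≠ 0) (hD : odet b c d ≠ 0) :
    (Cross a b c d ∨ Cross a c b d ∨ Cross a d b c) ↔
      χr (odet a b c) + χr (odet a b d) + χr (odet a c d) + χr (odet b c d) = 0 := by
  rw [cross_iff' hA hB hC hD,
      cross_iff' (show odet a c b ≠ 0 by rw [odet_swap23 a b c]; simpa using hA) hC
        (show odet a b d ≠ 0 from hB)
        (show odet c b d ≠ 0 by rw [odet_swap12 b c d]; simpa using hD),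
      cross_iff' (show odet a d b ≠ 0 by rw [odet_swap23 a b d]; simpa using hB)
        (show odet a d c ≠ 0 by rw [odet_swap23 a c d]; simpa using hC)
        (show odet a b c ≠ 0 from hA)
        (show odet d b c ≠ 0 by rw [odet_cyc d b c]; exact hD)]
  rw [show odet a c b = -odet a b c from odet_swap23 a b c,
      show odet c b d = -odet b c d from odet_swap12 b c d,
      show odet a d b = -odet a b d from odet_swap23 a b d,
      show odet a d c = -odet a c d from odet_swap23 a c d,
      show odet d b c = odet b c d from odet_cyc d b c]
  rw [neg_mul, mul_neg, neg_lt_zero, neg_lt_zero, neg_mul_neg]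
  exact signs_lemma hA hB hC hD (odet_identity a b c d)

/-! #### a linear order on the plane -/

def pr (p q : ℝ × ℝ) : Prop := p.1 < q.1 ∨ (p.1 = q.1 ∧ p.2 ≤ q.2)

instance : IsTrans (ℝ × ℝ) pr := by
  constructor
  rintro a b c (h | ⟨h1, h2⟩) (g | ⟨g1, g2⟩)
  · exact Or.inl (lt_trans h g)
  · exact Or.inl (by rw [← g1]; exact h)
  · exact Or.inl (by rw [h1]; exact g)
  · exact Or.inr ⟨h1.trans g1, h2.trans g2⟩

instance : IsAntisymm (ℝ × ℝ) pr := by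
  constructor
  rintro a b (h | ⟨h1, h2⟩) (g | ⟨g1, g2⟩)
  · exact absurd (lt_trans h g) (lt_irrefl _)
  · exact absurd h (by rw [g1]; exact lt_irrefl _)
  · exact absurd g (by rw [h1]; exact lt_irrefl _)
  · exact Prod.ext h1 (le_antisymm h2 g2)

instance : IsTotal (ℝ × ℝ) pr := by
  constructor
  intro a b
  rcases lt_trichotomy a.1 b.1 with h | h | h
  · exact Or.inl (Or.inl h)
  · rcases le_total a.2 b.2 with g | g
    · exact Or.inl (Or.inr ⟨h, g⟩)
    · exact Or.inr (Or.inr ⟨h.symm, g⟩)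
  · exact Or.inr (Or.inl h)

lemma sort_eq {l : List (ℝ × ℝ)} (hs : l.Pairwise pr) (hn : l.Nodup) :
    Finset.sort l.toFinset pr = l :=
  List.Perm.eq_of_pairwise' (Finset.pairwise_sort _ pr) hs
    (List.perm_of_nodup_nodup_toFinset_eq (Finset.sort_nodup _ pr) hn
      (by rw [Finset.sort_toFinset]))

/-! #### the parity invariant of a finite point set -/

noncomputable def auxχ : List (ℝ × ℝ) → ZMod 2
  | [x, y, z] => χr (odet x y z)
  | _ => 0

noncomputable def χ3 (t : Finset (ℝ × ℝ)) : ZMod 2 := auxχ (t.sort pr)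

lemma χ3_eq {x y z : ℝ × ℝ} (hxy : pr x y) (hyz : pr y z) (hxz : pr x z)
    (nxy : x ≠ y) (nyz : y ≠ z) (nxz : x ≠ z) :
    χ3 {x, y, z} = χr (odet x y z) := by
  have h : ({x, y, z} : Finset (ℝ × ℝ)) = ([x, y, z] : List (ℝ × ℝ)).toFinset := by
    simp
  rw [χ3, h, sort_eq (by simp [List.pairwise_cons, hxy, hyz, hxz]) (by simp [nxy, nyz, nxz])]
  rfl

noncomputable def pat (q : Finset (ℝ × ℝ)) : ZMod 2 :=
  ∑ t ∈ q.powersetCard 3, χ3 t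


/-! #### enumeration lemmas -/

lemma cross_align {a b c d x y z w : ℝ × ℝ}
    (hq : ({x, y, z, w} : Finset (ℝ × ℝ)) = {a, b, c, d})
    (n1 : x ≠ y) (n2 : x ≠ z) (n3 : x ≠ w) (n4 : y ≠ z) (n5 : y ≠ w) (n6 : z ≠ w)
    (h : Cross x y z w) : Cross a b c d ∨ Cross a c b d ∨ Cross a d b c := by
  have hx : x ∈ ({a, b, c, d} : Finset (ℝ × ℝ)) := by rw [← hq]; simp
  have hy : y ∈ ({a, b, c, d} : Finset (ℝ × ℝ)) := by rw [← hq]; simp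
  have hz : z ∈ ({a, b, c, d} : Finset (ℝ × ℝ)) := by rw [← hq]; simp
  have hw : w ∈ ({a, b, c, d} : Finset (ℝ × ℝ)) := by rw [← hq]; simp
  simp only [Finset.mem_insert, Finset.mem_singleton] at hx hy hz hw
  rcases hx with rfl | rfl | rfl | rfl <;>
  rcases hy with rfl | rfl | rfl | rfl <;>
  rcases hz with rfl | rfl | rfl | rfl <;>
  rcases hw with rfl | rfl | rfl | rfl <;>
  first
  | exact absurd rfl n1
  | exact absurd rfl n2
  | exact absurd rfl n3
  | exact absurd rfl n4
  | exact absurd rfl n5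
  | exact absurd rfl n6
  | exact Or.inl h
  | exact Or.inl h.swap1
  | exact Or.inl h.swap2
  | exact Or.inl h.swap1.swap2
  | exact Or.inl h.swapP
  | exact Or.inl h.swapP.swap1
  | exact Or.inl h.swapP.swap2
  | exact Or.inl h.swapP.swap1.swap2
  | exact Or.inr (Or.inl h)
  | exact Or.inr (Or.inl h.swap1)
  | exact Or.inr (Or.inl h.swap2)
  | exact Or.inr (Or.inl h.swap1.swap2)
  | exact Or.inr (Or.inl h.swapP)
  | exact Or.inr (Or.inl h.swapP.swap1)
  | exact Or.inr (Or.inl h.swapP.swap2)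
  | exact Or.inr (Or.inl h.swapP.swap1.swap2)
  | exact Or.inr (Or.inr h)
  | exact Or.inr (Or.inr h.swap1)
  | exact Or.inr (Or.inr h.swap2)
  | exact Or.inr (Or.inr h.swap1.swap2)
  | exact Or.inr (Or.inr h.swapP)
  | exact Or.inr (Or.inr h.swapP.swap1)
  | exact Or.inr (Or.inr h.swapP.swap2)
  | exact Or.inr (Or.inr h.swapP.swap1.swap2)

lemma qswap1 (p q u v : ℝ × ℝ) : s(s(q, p), s(u, v)) = s(s(p, q), s(u, v)) :=
  congrArg (fun m => s(m, s(u, v))) Sym2.eq_swap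

lemma qswap2 (p q u v : ℝ × ℝ) : s(s(p, q), s(v, u)) = s(s(p, q), s(u, v)) :=
  congrArg (fun m => s(s(p, q), m)) Sym2.eq_swap

lemma qswapP (p q u v : ℝ × ℝ) : s(s(u, v), s(p, q)) = s(s(p, q), s(u, v)) :=
  Sym2.eq_swap

lemma cross_unique {a b c d x y z w : ℝ × ℝ}
    (hq : ({x, y, z, w} : Finset (ℝ × ℝ)) = {a, b, c, d})
    (hA : odet a b c ≠ 0) (hB : odet a b d ≠ 0) (hC : odet a c d ≠ 0) (hD : odet b c d ≠ 0)
    (n1 : x ≠ y) (n2 : x ≠ z) (n3 : x ≠ w) (n4 : y ≠ z) (n5 : y ≠ w) (n6 : z ≠ w)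
    (h1 : Cross a b c d) (h2 : Cross x y z w) :
    s(s(x, y), s(z, w)) = s(s(a, b), s(c, d)) := by
  have hx : x ∈ ({a, b, c, d} : Finset (ℝ × ℝ)) := by rw [← hq]; simp
  have hy : y ∈ ({a, b, c, d} : Finset (ℝ × ℝ)) := by rw [← hq]; simp
  have hz : z ∈ ({a, b, c, d} : Finset (ℝ × ℝ)) := by rw [← hq]; simp
  have hw : w ∈ ({a, b, c, d} : Finset (ℝ × ℝ)) := by rw [← hq]; simp
  simp only [Finset.mem_insert, Finset.mem_singleton] at hx hy hz hw
  rcases hx with rfl | rfl | rfl | rfl <;>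
  rcases hy with rfl | rfl | rfl | rfl <;>
  rcases hz with rfl | rfl | rfl | rfl <;>
  rcases hw with rfl | rfl | rfl | rfl <;>
  first
  | exact absurd rfl n1
  | exact absurd rfl n2
  | exact absurd rfl n3
  | exact absurd rfl n4
  | exact absurd rfl n5
  | exact absurd rfl n6
  | exact rfl
  | exact qswap1 _ _ _ _
  | exact qswap2 _ _ _ _
  | exact (qswap1 _ _ _ _).trans (qswap2 _ _ _ _)
  | exact qswapP _ _ _ _
  | exact (qswap1 _ _ _ _).trans (qswapP _ _ _ _)
  | exact (qswap2 _ _ _ _).trans (qswapP _ _ _ _)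
  | exact (qswap1 _ _ _ _).trans ((qswap2 _ _ _ _).trans (qswapP _ _ _ _))
  | exact (noTwo₁ hA hB hC hD h1 h2).elim
  | exact (noTwo₁ hA hB hC hD h1 h2.swap1).elim
  | exact (noTwo₁ hA hB hC hD h1 h2.swap2).elim
  | exact (noTwo₁ hA hB hC hD h1 h2.swap1.swap2).elim
  | exact (noTwo₁ hA hB hC hD h1 h2.swapP).elim
  | exact (noTwo₁ hA hB hC hD h1 h2.swapP.swap1).elim
  | exact (noTwo₁ hA hB hC hD h1 h2.swapP.swap2).elim
  | exact (noTwo₁ hA hB hC hD h1 h2.swapP.swap1.swap2).elim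
  | exact (noTwo₂ hA hB hC hD h1 h2).elim
  | exact (noTwo₂ hA hB hC hD h1 h2.swap1).elim
  | exact (noTwo₂ hA hB hC hD h1 h2.swap2).elim
  | exact (noTwo₂ hA hB hC hD h1 h2.swap1.swap2).elim
  | exact (noTwo₂ hA hB hC hD h1 h2.swapP).elim
  | exact (noTwo₂ hA hB hC hD h1 h2.swapP.swap1).elim
  | exact (noTwo₂ hA hB hC hD h1 h2.swapP.swap2).elim
  | exact (noTwo₂ hA hB hC hD h1 h2.swapP.swap1.swap2).elim

/-! #### support of a crossing datum -/

noncomputable def pairF : Sym2 (ℝ × ℝ) → Finset (ℝ × ℝ) :=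
  Sym2.lift ⟨fun a b => {a, b}, fun a b => Finset.pair_comm a b⟩

noncomputable def supp : Sym2 (Sym2 (ℝ × ℝ)) → Finset (ℝ × ℝ) :=
  Sym2.lift ⟨fun u v => pairF u ∪ pairF v, fun u v => Finset.union_comm _ _⟩

lemma supp_mk (a b c d : ℝ × ℝ) : supp s(s(a, b), s(c, d)) = {a, b, c, d} := by
  show pairF s(a, b) ∪ pairF s(c, d) = {a, b, c, d}
  show ({a, b} : Finset (ℝ × ℝ)) ∪ {c, d} = {a, b, c, d}
  ext u
  simp only [Finset.mem_union, Finset.mem_insert, Finset.mem_singleton]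
  tauto

lemma pair_disj_iff {a b c d : ℝ × ℝ} :
    ({a, b} : Set (ℝ × ℝ)) ∩ {c, d} = ∅ ↔ a ≠ c ∧ a ≠ d ∧ b ≠ c ∧ b ≠ d := by
  constructor
  · intro h
    have ha := Set.eq_empty_iff_forall_notMem.mp h a
    have hb := Set.eq_empty_iff_forall_notMem.mp h b
    simp at ha hb
    exact ⟨ha.1, ha.2, hb.1, hb.2⟩
  · rintro ⟨h1, h2, h3, h4⟩
    apply Set.eq_empty_iff_forall_notMem.mpr
    intro u hu
    simp at hu
    rcases hu with ⟨hu1 | hu1, hu2 | hu2⟩ <;> subst hu1 <;> simp_all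

/-! #### sorting a 4-element set -/

lemma exists_sorted_four {q : Finset (ℝ × ℝ)} (hq : q.card = 4) :
    ∃ a b c d, q.sort pr = [a, b, c, d] := by
  have hl : (q.sort pr).length = 4 := by rw [Finset.length_sort, hq]
  rcases hll : q.sort pr with _ | ⟨a, l⟩
  · rw [hll] at hl; simp at hl
  · rw [hll] at hl
    simp only [List.length_cons] at hl
    have : l.length = 3 := by omega
    obtain ⟨b, c, d, rfl⟩ := List.length_eq_three.mp this
    exact ⟨a, b, c, d, rfl⟩

lemma sum_powersetCard_pred {q : Finset (ℝ × ℝ)} (hq : q.card = 4)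
    (f : Finset (ℝ × ℝ) → ZMod 2) :
    ∑ t ∈ q.powersetCard 3, f t = ∑ x ∈ q, f (q.erase x) := by
  refine (Finset.sum_bij (fun x _ => q.erase x) ?_ ?_ ?_ ?_).symm
  · intro x hx
    rw [Finset.mem_powersetCard]
    exact ⟨Finset.erase_subset _ _, by rw [Finset.card_erase_of_mem hx, hq]⟩
  · intro x hx y hy hxy
    have hxy' : q.erase x = q.erase y := hxy
    by_contra hne
    have hmem : x ∈ q.erase y := Finset.mem_erase.mpr ⟨hne, hx⟩
    rw [← hxy'] at hmem
    exact (Finset.mem_erase.mp hmem).1 rfl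
  · intro t ht
    rw [Finset.mem_powersetCard] at ht
    have hcard : (q \ t).card = 1 := by rw [Finset.card_sdiff_of_subset ht.1, hq, ht.2]
    obtain ⟨x, hx⟩ := Finset.card_eq_one.mp hcard
    have hxq : x ∈ q := by
      have : x ∈ q \ t := hx ▸ Finset.mem_singleton_self x
      exact (Finset.mem_sdiff.mp this).1
    refine ⟨x, hxq, ?_⟩
    show q.erase x = t
    rw [Finset.erase_eq, ← hx, Finset.sdiff_sdiff_self_left]
    exact Finset.inter_eq_right.mpr ht.1
  · intro x hx; rfl

lemma pat_four {q : Finset (ℝ × ℝ)} {a b c d : ℝ × ℝ} (hq : q.card = 4)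
    (hsort : q.sort pr = [a, b, c, d]) :
    q = {a, b, c, d} ∧
    (a ≠ b ∧ a ≠ c ∧ a ≠ d ∧ b ≠ c ∧ b ≠ d ∧ c ≠ d) ∧
    pat q = χr (odet a b c) + χr (odet a b d) + χr (odet a c d) + χr (odet b c d) := by
  have hnd : ([a, b, c, d] : List (ℝ × ℝ)).Nodup := by
    rw [← hsort]; exact Finset.sort_nodup q pr
  have hsrt : ([a, b, c, d] : List (ℝ × ℝ)).Pairwise pr := by
    rw [← hsort]; exact Finset.pairwise_sort q pr
  simp only [List.nodup_cons, List.mem_cons, List.mem_singleton, List.not_mem_nil,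
    or_false, not_or, List.nodup_nil, and_true] at hnd
  obtain ⟨⟨nab, nac, nad⟩, ⟨nbc, nbd⟩, ncd, -⟩ := hnd
  have rab : pr a b := List.rel_of_pairwise_cons hsrt (by simp)
  have rac : pr a c := List.rel_of_pairwise_cons hsrt (by simp)
  have rad : pr a d := List.rel_of_pairwise_cons hsrt (by simp)
  have rbc : pr b c := List.rel_of_pairwise_cons hsrt.of_cons (by simp)
  have rbd : pr b d := List.rel_of_pairwise_cons hsrt.of_cons (by simp)
  have rcd : pr c d := List.rel_of_pairwise_cons hsrt.of_cons.of_cons (by simp)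
  have hqeq : q = {a, b, c, d} := by
    have h := Finset.sort_toFinset q pr
    rw [hsort] at h
    rw [← h]
    simp only [List.toFinset_cons, List.toFinset_nil, LawfulSingleton.insert_empty_eq]
  refine ⟨hqeq, ⟨nab, nac, nad, nbc, nbd, ncd⟩, ?_⟩
  have e1 : ({a, b, c, d} : Finset (ℝ × ℝ)).erase a = {b, c, d} :=
    Finset.erase_insert (by simp [nab, nac, nad])
  have e2 : ({a, b, c, d} : Finset (ℝ × ℝ)).erase b = {a, c, d} := by
    rw [Finset.erase_insert_of_ne nab, Finset.erase_insert (by simp [nbc, nbd])]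
  have e3 : ({a, b, c, d} : Finset (ℝ × ℝ)).erase c = {a, b, d} := by
    rw [Finset.erase_insert_of_ne nac, Finset.erase_insert_of_ne nbc,
      Finset.erase_insert (by simp [ncd])]
  have e4 : ({a, b, c, d} : Finset (ℝ × ℝ)).erase d = {a, b, c} := by
    rw [Finset.erase_insert_of_ne nad, Finset.erase_insert_of_ne nbd,
      Finset.erase_insert_of_ne ncd, Finset.erase_singleton]
    simp
  rw [pat, sum_powersetCard_pred hq, hqeq]
  rw [Finset.sum_insert (by simp [nab, nac, nad]),
      Finset.sum_insert (by simp [nbc, nbd]),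
      Finset.sum_insert (by simp [ncd]),
      Finset.sum_singleton, e1, e2, e3, e4]
  rw [χ3_eq rbc rcd (_root_.trans rbc rcd) nbc ncd nbd,
      χ3_eq rac rcd (_root_.trans rac rcd) nac ncd nad,
      χ3_eq rab rbd (_root_.trans rab rbd) nab nbd nad,
      χ3_eq rab rbc (_root_.trans rab rbc) nab nbc nac]
  ring

lemma count8 {S t : Finset (ℝ × ℝ)} (hS : S.card = 11) (ht : t ⊆ S) (h3 : t.card = 3) :
    ((S.powersetCard 4).filter fun q => t ⊆ q).card = 8 := by
  have himg : ((S.powersetCard 4).filter fun q => t ⊆ q) =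
      (S \ t).image (fun x => insert x t) := by
    ext q
    simp only [Finset.mem_filter, Finset.mem_powersetCard, Finset.mem_image, Finset.mem_sdiff]
    constructor
    · rintro ⟨⟨hsub, hc4⟩, htq⟩
      have hcard : (q \ t).card = 1 := by rw [Finset.card_sdiff_of_subset htq, hc4, h3]
      obtain ⟨x, hx⟩ := Finset.card_eq_one.mp hcard
      have hxq : x ∈ q \ t := hx ▸ Finset.mem_singleton_self x
      rw [Finset.mem_sdiff] at hxq
      refine ⟨x, ⟨hsub hxq.1, hxq.2⟩, ?_⟩
      have : q = t ∪ (q \ t) := (Finset.union_sdiff_of_subset htq).symm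
      rw [this, hx]
      ext u
      simp only [Finset.mem_union, Finset.mem_insert, Finset.mem_singleton]
      tauto
    · rintro ⟨x, ⟨hxS, hxt⟩, rfl⟩
      refine ⟨⟨?_, ?_⟩, Finset.subset_insert _ _⟩
      · exact Finset.insert_subset hxS ht
      · rw [Finset.card_insert_of_notMem hxt, h3]
  rw [himg, Finset.card_image_of_injOn, Finset.card_sdiff_of_subset ht, hS, h3]
  intro x hx y hy hxy
  simp only [Finset.coe_sdiff, Set.mem_diff, Finset.mem_coe] at hx hy
  have hxy' : insert x t = insert y t := hxy
  have : x ∈ insert y t := by rw [← hxy']; exact Finset.mem_insert_self _ _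
  rcases Finset.mem_insert.mp this with h | h
  · exact h
  · exact absurd h hx.2


set_option maxHeartbeats 2000000 in
lemma pat_iff {q : Finset (ℝ × ℝ)} (hq4 : q.card = 4)
    (hgp : ∀ p ∈ q, ∀ r ∈ q, ∀ t ∈ q, p ≠ r → p ≠ t → r ≠ t → odet p r t ≠ 0) :
    pat q = 0 ↔ ∃ a b c d, q = {a, b, c, d} ∧
      a ≠ b ∧ a ≠ c ∧ a ≠ d ∧ b ≠ c ∧ b ≠ d ∧ c ≠ d ∧ Cross a b c d := by
  obtain ⟨a, b, c, d, hsort⟩ := exists_sorted_four hq4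
  obtain ⟨hqeq, ⟨nab, nac, nad, nbc, nbd, ncd⟩, hpat⟩ := pat_four hq4 hsort
  have ma : a ∈ q := by rw [hqeq]; simp
  have mb : b ∈ q := by rw [hqeq]; simp
  have mc : c ∈ q := by rw [hqeq]; simp
  have md : d ∈ q := by rw [hqeq]; simp
  have hA : odet a b c ≠ 0 := hgp a ma b mb c mc nab nac nbc
  have hB : odet a b d ≠ 0 := hgp a ma b mb d md nab nad nbd
  have hC : odet a c d ≠ 0 := hgp a ma c mc d md nac nad ncd
  have hD : odet b c d ≠ 0 := hgp b mb c mc d md nbc nbd ncd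
  have hiff : (Cross a b c d ∨ Cross a c b d ∨ Cross a d b c) ↔ pat q = 0 := by
    rw [hpat]; exact four_cross_iff hA hB hC hD
  constructor
  · intro h0
    rcases hiff.mpr h0 with h | h | h
    · exact ⟨a, b, c, d, hqeq, nab, nac, nad, nbc, nbd, ncd, h⟩
    · refine ⟨a, c, b, d, ?_, nac, nab, nad, Ne.symm nbc, ncd, nbd, h⟩
      rw [hqeq]; ext u; simp only [Finset.mem_insert, Finset.mem_singleton]; tauto
    · refine ⟨a, d, b, c, ?_, nad, nab, nac, Ne.symm nbd, Ne.symm ncd, nbc, h⟩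
      rw [hqeq]; ext u; simp only [Finset.mem_insert, Finset.mem_singleton]; tauto
  · rintro ⟨x, y, z, w, hqeq2, m1, m2, m3, m4, m5, m6, h⟩
    apply hiff.mp
    exact cross_align (by rw [← hqeq2, hqeq]) m1 m2 m3 m4 m5 m6 h

end CrossAux

set_option maxHeartbeats 2000000 in
/-- Every set of 11 points in the plane in general position has an even number of
crossings. -/
theorem even_crossings_eleven_points (S : Finset (ℝ × ℝ)) (hcard : S.card = 11)
    (hgp : GenPos ↑S) :
    Even (cr ↑S) := by
  classical
  open CrossAux in
  -- the explicit finset of crossing data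
  set F : Finset (Sym2 (Sym2 (ℝ × ℝ))) :=
    ((S ×ˢ S ×ˢ S ×ˢ S).filter fun p =>
        p.1 ≠ p.2.1 ∧ p.2.2.1 ≠ p.2.2.2 ∧
        ({p.1, p.2.1} : Set (ℝ × ℝ)) ∩ {p.2.2.1, p.2.2.2} = ∅ ∧
        CrossAux.Cross p.1 p.2.1 p.2.2.1 p.2.2.2).image
      (fun p => s(s(p.1, p.2.1), s(p.2.2.1, p.2.2.2))) with hF
  have hgp' : ∀ x ∈ S, ∀ y ∈ S, ∀ z ∈ S, x ≠ y → x ≠ z → y ≠ z → odet x y z ≠ 0 := by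
    intro x hx y hy z hz
    exact hgp x (by simpa using hx) y (by simpa using hy) z (by simpa using hz)
  have hset : {x : Sym2 (Sym2 (ℝ × ℝ)) |
      ∃ a b c d : ℝ × ℝ, x = s(s(a, b), s(c, d)) ∧
      a ∈ (↑S : Set (ℝ × ℝ)) ∧ b ∈ (↑S : Set (ℝ × ℝ)) ∧ c ∈ (↑S : Set (ℝ × ℝ)) ∧
      d ∈ (↑S : Set (ℝ × ℝ)) ∧ a ≠ b ∧ c ≠ d ∧
      ({a, b} : Set (ℝ × ℝ)) ∩ {c, d} = ∅ ∧
      (openSegment ℝ a b ∩ openSegment ℝ c d).Nonempty} = ↑F := by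
    ext xx
    simp only [hF, Finset.coe_image, Set.mem_image, Finset.mem_coe, Finset.mem_filter,
      Finset.mem_product, Set.mem_setOf_eq, Finset.mem_coe]
    constructor
    · rintro ⟨a, b, c, d, rfl, ha, hb, hc, hd, hab, hcd, hdisj, hcross⟩
      exact ⟨(a, b, c, d), ⟨⟨by simpa using ha, by simpa using hb, by simpa using hc,
        by simpa using hd⟩, hab, hcd, hdisj, hcross⟩, rfl⟩
    · rintro ⟨⟨a, b, c, d⟩, ⟨⟨ha, hb, hc, hd⟩, hab, hcd, hdisj, hcross⟩, rfl⟩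
      exact ⟨a, b, c, d, rfl, by simpa using ha, by simpa using hb, by simpa using hc,
        by simpa using hd, hab, hcd, hdisj, hcross⟩
  have h1 : cr ↑S = F.card := by
    unfold cr
    rw [← Set.ncard_coe_finset F, ← hset]
    exact Nat.card_coe_set_eq _
  have h2 : F.card = ((S.powersetCard 4).filter fun q => CrossAux.pat q = 0).card := by
    refine Finset.card_bij (fun x _ => CrossAux.supp x) ?_ ?_ ?_
    · intro x hx
      simp only [hF, Finset.mem_image, Finset.mem_filter, Finset.mem_product] at hx
      obtain ⟨⟨a, b, c, d⟩, ⟨⟨ha, hb, hc, hd⟩, hab, hcd, hdisj, hcross⟩, rfl⟩ := hx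
      dsimp only at ha hb hc hd hab hcd hdisj hcross ⊢
      obtain ⟨hac, had, hbc, hbd⟩ := CrossAux.pair_disj_iff.mp hdisj
      rw [CrossAux.supp_mk, Finset.mem_filter, Finset.mem_powersetCard]
      have hsub : ({a, b, c, d} : Finset (ℝ × ℝ)) ⊆ S := by
        intro u hu
        simp only [Finset.mem_insert, Finset.mem_singleton] at hu
        rcases hu with rfl | rfl | rfl | rfl <;> assumption
      have hc4 : ({a, b, c, d} : Finset (ℝ × ℝ)).card = 4 := by
        rw [Finset.card_insert_of_notMem (by simp [hab, hac, had]),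
          Finset.card_insert_of_notMem (by simp [hbc, hbd]),
          Finset.card_insert_of_notMem (by simp [hcd]), Finset.card_singleton]
      refine ⟨⟨hsub, hc4⟩, ?_⟩
      rw [CrossAux.pat_iff hc4 (fun p hp r hr t ht => hgp' p (hsub hp) r (hsub hr) t (hsub ht))]
      exact ⟨a, b, c, d, rfl, hab, hac, had, hbc, hbd, hcd, hcross⟩
    · intro x hx x' hx' heq
      simp only [hF, Finset.mem_image, Finset.mem_filter, Finset.mem_product] at hx hx'
      obtain ⟨⟨a, b, c, d⟩, ⟨⟨ha, hb, hc, hd⟩, hab, hcd, hdisj, hcross⟩, rfl⟩ := hx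
      obtain ⟨⟨a', b', c', d'⟩, ⟨⟨ha', hb', hc', hd'⟩, hab', hcd', hdisj', hcross'⟩, rfl⟩ := hx'
      dsimp only at ha hb hc hd hab hcd hdisj hcross ha' hb' hc' hd' hab' hcd' hdisj' hcross' heq ⊢
      obtain ⟨hac, had, hbc, hbd⟩ := CrossAux.pair_disj_iff.mp hdisj
      obtain ⟨hac', had', hbc', hbd'⟩ := CrossAux.pair_disj_iff.mp hdisj'
      have heq' : ({a, b, c, d} : Finset (ℝ × ℝ)) = {a', b', c', d'} := by
        rw [← CrossAux.supp_mk a b c d, ← CrossAux.supp_mk a' b' c' d']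
        exact heq
      exact CrossAux.cross_unique heq'
        (hgp' a' ha' b' hb' c' hc' hab' hac' hbc')
        (hgp' a' ha' b' hb' d' hd' hab' had' hbd')
        (hgp' a' ha' c' hc' d' hd' hac' had' hcd')
        (hgp' b' hb' c' hc' d' hd' hbc' hbd' hcd')
        hab hac had hbc hbd hcd hcross' hcross
    · intro q hq
      simp only [Finset.mem_filter, Finset.mem_powersetCard] at hq
      obtain ⟨⟨hsub, hc4⟩, hpat⟩ := hq
      obtain ⟨a, b, c, d, rfl, d1, d2, d3, d4, d5, d6, hcross⟩ :=
        (CrossAux.pat_iff hc4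
          (fun p hp r hr t ht => hgp' p (hsub hp) r (hsub hr) t (hsub ht))).mp hpat
      refine ⟨s(s(a, b), s(c, d)), ?_, CrossAux.supp_mk a b c d⟩
      simp only [hF, Finset.mem_image, Finset.mem_filter, Finset.mem_product]
      refine ⟨(a, b, c, d), ⟨⟨hsub (by simp), hsub (by simp), hsub (by simp), hsub (by simp)⟩,
        d1, d6, CrossAux.pair_disj_iff.mpr ⟨d2, d3, d4, d5⟩, hcross⟩, rfl⟩
  -- parity count
  have hsum : ∑ q ∈ S.powersetCard 4, CrossAux.pat q = 0 := by
    have hstep : ∀ q ∈ S.powersetCard 4,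
        CrossAux.pat q = ∑ t ∈ S.powersetCard 3, if t ⊆ q then CrossAux.χ3 t else 0 := by
      intro q hq
      rw [Finset.mem_powersetCard] at hq
      have hps : q.powersetCard 3 = (S.powersetCard 3).filter fun t => t ⊆ q := by
        ext t
        simp only [Finset.mem_powersetCard, Finset.mem_filter]
        exact ⟨fun h => ⟨⟨h.1.trans hq.1, h.2⟩, h.1⟩, fun h => ⟨h.2, h.1.2⟩⟩
      rw [CrossAux.pat, hps, Finset.sum_filter]
    rw [Finset.sum_congr rfl hstep, Finset.sum_comm]
    have hzero : ∀ t ∈ S.powersetCard 3,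
        (∑ q ∈ S.powersetCard 4, if t ⊆ q then CrossAux.χ3 t else 0) = 0 := by
      intro t ht
      rw [Finset.mem_powersetCard] at ht
      rw [← Finset.sum_filter, Finset.sum_const,
        CrossAux.count8 hcard ht.1 ht.2]
      show (8 : ℕ) • CrossAux.χ3 t = 0
      have h8 : ((8 : ℕ) : ZMod 2) = 0 := by decide
      rw [nsmul_eq_mul, h8, zero_mul]
    rw [Finset.sum_congr rfl hzero, Finset.sum_const, smul_zero]
  have h4 : ((((S.powersetCard 4).filter fun q => CrossAux.pat q = 0).card : ℕ) : ZMod 2) = 0 := by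
    rw [Finset.card_filter, Nat.cast_sum]
    have hite : ∀ q ∈ S.powersetCard 4,
        (((if CrossAux.pat q = 0 then 1 else 0 : ℕ) : ZMod 2)) = 1 + CrossAux.pat q := by
      intro q _
      have : ∀ z : ZMod 2, ((if z = 0 then 1 else 0 : ℕ) : ZMod 2) = 1 + z := by decide
      exact this _
    rw [Finset.sum_congr rfl hite, Finset.sum_add_distrib, hsum, add_zero, Finset.sum_const,
      Finset.card_powersetCard, hcard]
    show (Nat.choose 11 4) • (1 : ZMod 2) = 0
    have hch : Nat.choose 11 4 = 330 := rfl
    have h330 : ((330 : ℕ) : ZMod 2) = 0 := by decide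
    rw [nsmul_eq_mul, mul_one, hch, h330]
  rw [h1, h2]
  rw [even_iff_two_dvd]
  exact (ZMod.natCast_eq_zero_iff _ 2).mp h4
end
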